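/- arXiv:1306.4494 — 3 statements merged into one kernel-verified Lean document; each statement's English description precedes it below -/
import Mathlib

section
/- Let E ⊆ ℝⁿ satisfy 0 < H_α(E) < ∞, and suppose there exist constants a > 0 and r_α > 0 such that a·r^α ≤ H_α(E ∩ B_r(x)) for all x ∈ E and all 0 < r < r_α. Then the packing α-measure of E is finite: P^α(E) < ∞. -/
open Metric Set MeasureTheory Filter ENNReal

/-- The quantity `P^s_ε(A)`: the supremum of `Σ (2 r_k)^s` over all packings of `A`,
i.e. collections of pairwise disjoint open balls with centres in `A` and radii
`0 < r_k ≤ ε/2`. -/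
noncomputable def prePackingAux {X : Type*} [MetricSpace X] (s ε : ℝ) (A : Set X) : ℝ≥0∞ :=
  ⨆ (t : Finset (X × ℝ)) (_ : ∀ p ∈ t, p.1 ∈ A ∧ 0 < p.2 ∧ p.2 ≤ ε / 2)
    (_ : (t : Set (X × ℝ)).Pairwise fun p q =>
      Disjoint (Metric.ball p.1 p.2) (Metric.ball q.1 q.2)),
    ∑ p ∈ t, ENNReal.ofReal ((2 * p.2) ^ s)

/-- The packing premeasure `P^s_0(A) = lim_{ε ↓ 0} P^s_ε(A)`; since `ε ↦ P^s_ε(A)` is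
nondecreasing, the limit is the infimum over `ε > 0`. -/
noncomputable def prePacking {X : Type*} [MetricSpace X] (s : ℝ) (A : Set X) : ℝ≥0∞ :=
  ⨅ (ε : ℝ) (_ : 0 < ε), prePackingAux s ε A

/-- The packing `s`-measure `P^s(A) = inf {Σ_i P^s_0(A_i) : A = ∪_i A_i}`. -/
noncomputable def packingMeasure {X : Type*} [MetricSpace X] (s : ℝ) (A : Set X) : ℝ≥0∞ :=
  ⨅ (c : ℕ → Set X) (_ : A ⊆ ⋃ i, c i), ∑' i, prePacking s (c i)

lemma prePacking_empty {X : Type*} [MetricSpace X] (s : ℝ) :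
    prePacking s (∅ : Set X) = 0 := by
  refine le_antisymm (le_trans (iInf₂_le 1 one_pos) ?_) zero_le
  refine iSup_le fun t => iSup_le fun ht => iSup_le fun _ => ?_
  have : t = ∅ := Finset.eq_empty_of_forall_notMem fun p hp => (ht p hp).1
  simp [this]

theorem packingMeasure_lt_top_of_lower_regular (n : ℕ) (α : ℝ) (hα : 0 ≤ α)
    (E : Set (EuclideanSpace ℝ (Fin n)))
    (hE0 : 0 < μH[α] E) (hEfin : μH[α] E < ⊤)
    (a rα : ℝ) (ha : 0 < a) (hrα : 0 < rα)
    (hreg : ∀ x ∈ E, ∀ r : ℝ, 0 < r → r < rα →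
      ENNReal.ofReal (a * r ^ α) ≤ μH[α] (E ∩ Metric.ball x r)) :
    packingMeasure α E < ⊤ := by
  set C := ENNReal.ofReal (2 ^ α / a) * μH[α] E with hC
  have hCfin : C < ⊤ := ENNReal.mul_lt_top ENNReal.ofReal_lt_top hEfin
  have haux : prePackingAux α rα E ≤ C := by
    refine iSup_le fun t => iSup_le fun ht => iSup_le fun hdisj => ?_
    have key : ∀ p ∈ t, ENNReal.ofReal ((2 * p.2) ^ α) ≤
        ENNReal.ofReal (2 ^ α / a) * ((μH[α]).restrict E (Metric.ball p.1 p.2)) := by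
      intro p hp
      obtain ⟨hpE, hr0, hrle⟩ := ht p hp
      have hrlt : p.2 < rα := lt_of_le_of_lt hrle (by linarith)
      have h1 : (2 * p.2) ^ α = (2 ^ α / a) * (a * p.2 ^ α) := by
        rw [Real.mul_rpow (by norm_num) hr0.le]; field_simp
      rw [h1, ENNReal.ofReal_mul (by positivity)]
      refine mul_le_mul_right ?_ _
      rw [Measure.restrict_apply measurableSet_ball, Set.inter_comm]
      exact hreg p.1 hpE p.2 hr0 hrlt
    calc ∑ p ∈ t, ENNReal.ofReal ((2 * p.2) ^ α)
        ≤ ∑ p ∈ t, ENNReal.ofReal (2 ^ α / a) *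
            ((μH[α]).restrict E (Metric.ball p.1 p.2)) := Finset.sum_le_sum key
      _ = ENNReal.ofReal (2 ^ α / a) *
            ∑ p ∈ t, (μH[α]).restrict E (Metric.ball p.1 p.2) := by rw [Finset.mul_sum]
      _ = ENNReal.ofReal (2 ^ α / a) *
            (μH[α]).restrict E (⋃ p ∈ t, Metric.ball p.1 p.2) := by
          rw [measure_biUnion_finset hdisj fun p _ => measurableSet_ball]
      _ ≤ C := by
          rw [hC]
          refine mul_le_mul_right ?_ _
          calc (μH[α]).restrict E (⋃ p ∈ t, Metric.ball p.1 p.2)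
              ≤ (μH[α]).restrict E Set.univ := measure_mono (Set.subset_univ _)
            _ = μH[α] E := Measure.restrict_apply_univ E
  have hpre : prePacking α E ≤ C := le_trans (iInf₂_le rα hrα) haux
  have hpm : packingMeasure α E ≤ C := by
    refine le_trans (iInf₂_le (fun i => if i = 0 then E else ∅) ?_) ?_
    · intro x hx; exact Set.mem_iUnion.2 ⟨0, by simpa using hx⟩
    · rw [tsum_eq_single 0 (fun i hi => by simp [hi, prePacking_empty])]
      simpa using hpre
  exact lt_of_le_of_lt hpm hCfin
end

section
/- Let μ_α(A) := H_α(E ∩ A) for a set E ⊆ ℝⁿ with H_α(E) < ∞, and suppose k := inf_{x∈E} liminf_{r→0} (2r)^{-α} μ_α(B_r(x)) satisfies 0 < k < ∞. Then P^α(E) ≤ H_α(E)/k < ∞. -/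
open Metric Set MeasureTheory Filter ENNReal

section Aux
variable {X : Type*} [MetricSpace X] [MeasurableSpace X] [BorelSpace X]

lemma measurable_measure_ball' (ν : Measure X) (r : ℝ) :
    Measurable fun x => ν (Metric.ball x r) := by
  have lsc : LowerSemicontinuous fun x => ν (Metric.ball x r) := by
    intro x c hc
    rcases le_or_gt r 0 with hr | hr
    · simp [Metric.ball_eq_empty.2 hr] at hc
    · -- ball x r = ⋃ i, ball x (r - 1/(i+1))
      have hU : Metric.ball x r = ⋃ i : ℕ, Metric.ball x (r - 1 / (i + 1)) := by
        ext y
        simp only [Metric.mem_ball, Set.mem_iUnion]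
        constructor
        · intro hy
          obtain ⟨i, hi⟩ := exists_nat_one_div_lt (sub_pos.2 hy)
          exact ⟨i, by linarith⟩
        · rintro ⟨i, hi⟩
          have : (0:ℝ) < 1 / (i + 1) := by positivity
          linarith
      have hmono : Monotone fun i : ℕ => Metric.ball x (r - 1 / (i + 1)) := by
        intro i j hij
        apply Metric.ball_subset_ball
        have h1 : (1:ℝ) / (j + 1) ≤ 1 / (i + 1) := by
          apply one_div_le_one_div_of_le (by positivity)
          exact_mod_cast by exact_mod_cast add_le_add_left (Nat.cast_le.2 hij) 1
        linarith
      have := Directed.measure_iUnion (μ := ν)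
        (s := fun i : ℕ => Metric.ball x (r - 1 / (i + 1))) hmono.directed_le
      simp only [] at hc
      rw [show ν (Metric.ball x r) = ⨆ i : ℕ, ν (Metric.ball x (r - 1 / (i + 1))) from by rw [← this, ← hU]] at hc
      obtain ⟨i, hi⟩ := lt_iSup_iff.1 hc
      have hpos : (0:ℝ) < 1 / (i + 1) := by positivity
      filter_upwards [Metric.ball_mem_nhds x hpos] with y hy
      refine hi.trans_le (measure_mono fun z hz => ?_)
      rw [Metric.mem_ball] at *
      calc dist z y ≤ dist z x + dist x y := dist_triangle _ _ _
        _ < r - 1 / (i+1) + 1 / (i+1) := by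
            rw [dist_comm x y]; exact add_lt_add hz hy
        _ = r := by ring
  exact lsc.measurable

lemma exists_good_levels (ν : Measure X) [IsFiniteMeasure ν] {g : X → ℝ} (hg : Measurable g) :
    ∃ t : ℕ → ℝ, StrictAnti t ∧ (∀ j, 0 < t j) ∧ Tendsto t atTop (nhds 0) ∧
      ∀ j, ν (g ⁻¹' {t j}) = 0 := by
  have hcnt : Set.Countable {s : ℝ | 0 < ν {a | g a = s}} :=
    Measure.countable_meas_level_set_pos hg
  have hex : ∀ j : ℕ, ∃ s : ℝ, s ∈ Ioo ((2:ℝ)⁻¹ ^ (j + 2)) ((2:ℝ)⁻¹ ^ (j + 1)) ∧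
      ν (g ⁻¹' {s}) = 0 := by
    intro j
    have hlt : ((2:ℝ)⁻¹ ^ (j + 2)) < ((2:ℝ)⁻¹ ^ (j + 1)) := by
      apply pow_lt_pow_right_of_lt_one₀ (by norm_num) (by norm_num) (by omega)
    by_contra hno
    push_neg at hno
    have hsub : Ioo ((2:ℝ)⁻¹ ^ (j + 2)) ((2:ℝ)⁻¹ ^ (j + 1)) ⊆ {s : ℝ | 0 < ν {a | g a = s}} := by
      intro s hs
      have := hno s hs
      exact pos_iff_ne_zero.2 (by simpa [Set.preimage, Set.mem_singleton_iff] using this)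
    have : volume (Ioo ((2:ℝ)⁻¹ ^ (j + 2)) ((2:ℝ)⁻¹ ^ (j + 1))) = 0 :=
      measure_mono_null hsub (hcnt.measure_zero _)
    rw [Real.volume_Ioo] at this
    exact (ENNReal.ofReal_pos.2 (by linarith)).ne' this
  choose t ht hnull using hex
  refine ⟨t, ?_, ?_, ?_, hnull⟩
  · apply strictAnti_nat_of_succ_lt
    intro j
    have h1 := (ht (j + 1)).2
    have h2 := (ht j).1
    calc t (j + 1) < (2:ℝ)⁻¹ ^ (j + 2) := h1
      _ < t j := h2
  · intro j
    have := (ht j).1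
    have : (0:ℝ) < (2:ℝ)⁻¹ ^ (j + 2) := by positivity
    linarith [(ht j).1]
  · apply squeeze_zero (fun j => le_of_lt (by linarith [(ht j).1, show (0:ℝ) < (2:ℝ)⁻¹ ^ (j + 2) from by positivity]))
      (fun j => le_of_lt (ht j).2)
    have : Tendsto (fun j : ℕ => (2:ℝ)⁻¹ ^ j) atTop (nhds 0) :=
      tendsto_pow_atTop_nhds_zero_of_lt_one (by norm_num) (by norm_num)
    simpa [pow_succ] using this.mul_const ((2:ℝ)⁻¹)

lemma exists_decomp (ν : Measure X) [IsFiniteMeasure ν] (A V : Set X) (hAV : A ⊆ V)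
    (hV : IsOpen V) :
    ∃ P : ℕ → Set X, (∀ j, P j ⊆ A) ∧ (A ⊆ ⋃ j, P j) ∧ ∑' j, ν (closure (P j)) ≤ ν V := by
  rcases eq_or_ne Vᶜ ∅ with hVc | hVc
  · -- V = univ : single piece
    have hVuniv : V = univ := by
      exact Set.compl_empty_iff.1 hVc
    refine ⟨fun j => if j = 0 then A else ∅, fun j => by by_cases h : j = 0 <;> simp [h], ?_, ?_⟩
    · intro x hx; exact Set.mem_iUnion.2 ⟨0, by simpa using hx⟩
    · rw [tsum_eq_single 0 (fun j hj => by simp [hj])]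
      simp only [if_pos rfl]
      rw [hVuniv]
      exact measure_mono (subset_univ _)
  · -- Vᶜ nonempty
    set g : X → ℝ := fun x => infDist x Vᶜ with hgdef
    have hgc : Continuous g := continuous_infDist_pt _
    obtain ⟨t, htanti, htpos, htlim, htnull⟩ := exists_good_levels ν hgc.measurable
    set I : ℕ → Set ℝ := fun j => Nat.rec (Ioi (t 0)) (fun j' _ => Ioc (t (j' + 1)) (t j')) j
      with hIdef
    have hI0 : I 0 = Ioi (t 0) := rfl
    have hIs : ∀ j, I (j + 1) = Ioc (t (j + 1)) (t j) := fun j => rfl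
    set P : ℕ → Set X := fun j => A ∩ g ⁻¹' (I j) with hPdef
    have hPA : ∀ j, P j ⊆ A := fun j => Set.inter_subset_left
    -- facts about membership in I
    have hImem_gt : ∀ j u, u ∈ I j → t j < u := by
      intro j u hu
      cases j with
      | zero => exact hu
      | succ j' => exact hu.1
    have hImem_le : ∀ j u, u ∈ I (j + 1) → u ≤ t j := fun j u hu => hu.2
    -- pairwise disjoint
    have hIdisj : Pairwise (Function.onFun Disjoint I) := by
      have key : ∀ i j : ℕ, i < j → Disjoint (I i) (I j) := by
        intro i j hij
        rw [Set.disjoint_left]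
        intro u hui huj
        obtain ⟨j', rfl⟩ : ∃ j', j = j' + 1 := ⟨j - 1, by omega⟩
        have h1 : t i < u := hImem_gt i u hui
        have h2 : u ≤ t j' := hImem_le j' u huj
        have h3 : t j' ≤ t i := htanti.antitone (by omega)
        linarith
      intro i j hij
      rcases lt_or_gt_of_ne hij with h | h
      · exact key i j h
      · exact (key j i h).symm
    have hImeas : ∀ j, MeasurableSet (I j) := by
      intro j
      cases j with
      | zero => exact measurableSet_Ioi
      | succ j' => exact measurableSet_Ioc
    -- g positive on V
    have hgpos : ∀ x ∈ V, 0 < g x := by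
      intro x hx
      rw [hgdef]
      exact ((hV.isClosed_compl).notMem_iff_infDist_pos
        (Set.nonempty_iff_ne_empty.2 hVc)).1 (by simpa using hx)
    refine ⟨P, hPA, ?_, ?_⟩
    · -- cover
      intro x hx
      have hpos : 0 < g x := hgpos x (hAV hx)
      have hex : ∃ j, t j < g x :=
        (htlim.eventually (eventually_lt_nhds hpos)).exists
      classical
      have hfind := Nat.find_spec hex
      set j := Nat.find hex with hjdef
      apply Set.mem_iUnion.2
      cases hj : j with
      | zero =>
        refine ⟨0, hx, ?_⟩
        rw [hI0]
        rw [hj] at hfind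
        exact hfind
      | succ j' =>
        refine ⟨j' + 1, hx, ?_⟩
        rw [hIs]
        constructor
        · rw [hj] at hfind; exact hfind
        · by_contra hle
          push_neg at hle
          exact Nat.find_min hex (by omega : j' < j) hle
    · -- sum bound
      have step1 : ∀ j, ν (closure (P j)) ≤ ν (g ⁻¹' (I j)) := by
        intro j
        cases j with
        | zero =>
          have h1 : closure (P 0) ⊆ g ⁻¹' (Ici (t 0)) := by
            have : closure (P 0) ⊆ closure (g ⁻¹' (Ioi (t 0))) :=
              closure_mono (Set.inter_subset_right : A ∩ g ⁻¹' (Ioi (t 0)) ⊆ _)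
            refine this.trans ?_
            refine (hgc.closure_preimage_subset _).trans ?_
            rw [closure_Ioi]
          calc ν (closure (P 0)) ≤ ν (g ⁻¹' (Ici (t 0))) := measure_mono h1
            _ ≤ ν (g ⁻¹' (Ioi (t 0)) ∪ g ⁻¹' {t 0}) := by
                apply measure_mono
                intro x hx
                rcases eq_or_lt_of_le (show t 0 ≤ g x from hx) with h | h
                · exact Or.inr (by simp [← h])
                · exact Or.inl h
            _ ≤ ν (g ⁻¹' (Ioi (t 0))) + ν (g ⁻¹' {t 0}) := measure_union_le _ _
            _ = ν (g ⁻¹' (I 0)) := by rw [htnull 0, add_zero, hI0]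
        | succ j' =>
          have h1 : closure (P (j' + 1)) ⊆ g ⁻¹' (Icc (t (j' + 1)) (t j')) := by
            apply closure_minimal
            · exact (Set.inter_subset_right :
                  A ∩ g ⁻¹' (Ioc (t (j'+1)) (t j')) ⊆ _).trans
                (Set.preimage_mono Set.Ioc_subset_Icc_self)
            · exact isClosed_Icc.preimage hgc
          calc ν (closure (P (j' + 1))) ≤ ν (g ⁻¹' (Icc (t (j' + 1)) (t j'))) := measure_mono h1
            _ ≤ ν (g ⁻¹' (Ioc (t (j' + 1)) (t j')) ∪ g ⁻¹' {t (j' + 1)}) := by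
                apply measure_mono
                intro x hx
                rcases eq_or_lt_of_le (show t (j' + 1) ≤ g x from hx.1) with h | h
                · exact Or.inr (by simp [← h])
                · exact Or.inl ⟨h, hx.2⟩
            _ ≤ ν (g ⁻¹' (Ioc (t (j' + 1)) (t j'))) + ν (g ⁻¹' {t (j' + 1)}) :=
                measure_union_le _ _
            _ = ν (g ⁻¹' (I (j' + 1))) := by rw [htnull (j' + 1), add_zero, hIs]
      calc ∑' j, ν (closure (P j)) ≤ ∑' j, ν (g ⁻¹' (I j)) := ENNReal.tsum_le_tsum step1
        _ = ν (⋃ j, g ⁻¹' (I j)) := by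
            rw [measure_iUnion (fun i j hij => (hIdisj hij).preimage g)
              (fun j => (hImeas j).preimage hgc.measurable)]
        _ ≤ ν V := by
            apply measure_mono
            rw [Set.iUnion_subset_iff]
            intro j x hx
            by_contra hxV
            have : g x = 0 := infDist_zero_of_mem (by simpa using hxV)
            have := hImem_gt j _ hx
            have := htpos j
            linarith

lemma mul_prePacking_le (ν : Measure X) [IsFiniteMeasure ν] (α : ℝ) (k'' : ℝ≥0∞)
    {R : ℝ} (hR : 0 < R) (A : Set X)
    (hA : ∀ x ∈ A, ∀ r : ℝ, 0 < r → r < R →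
      k'' * ENNReal.ofReal ((2 * r) ^ α) ≤ ν (Metric.ball x r)) :
    k'' * prePacking α A ≤ ν (closure A) := by
  set ε : ℕ → ℝ := fun l => min R (1 / (l + 1)) with hεdef
  have hεpos : ∀ l, 0 < ε l := fun l => lt_min hR (by positivity)
  have step1 : ∀ l, k'' * prePackingAux α (ε l) A ≤ ν (thickening (ε l) A) := by
    intro l
    rw [prePackingAux, ENNReal.mul_iSup]
    refine iSup_le fun t => ?_
    rw [ENNReal.mul_iSup]
    refine iSup_le fun ht => ?_
    rw [ENNReal.mul_iSup]
    refine iSup_le fun hd => ?_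
    calc k'' * ∑ p ∈ t, ENNReal.ofReal ((2 * p.2) ^ α)
        = ∑ p ∈ t, k'' * ENNReal.ofReal ((2 * p.2) ^ α) := Finset.mul_sum _ _ _
      _ ≤ ∑ p ∈ t, ν (Metric.ball p.1 p.2) := by
          refine Finset.sum_le_sum fun p hp => ?_
          obtain ⟨hpA, hppos, hple⟩ := ht p hp
          exact hA p.1 hpA p.2 hppos (by
            have := min_le_left R (1 / (l + 1 : ℝ))
            have h2 : ε l / 2 < ε l := by have := hεpos l; linarith
            calc p.2 ≤ ε l / 2 := hple
              _ < ε l := h2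
              _ ≤ R := min_le_left _ _)
      _ = ν (⋃ p ∈ t, Metric.ball p.1 p.2) := by
          refine (measure_biUnion_finset (fun p hp q hq hpq => hd hp hq hpq)
            (fun p _ => measurableSet_ball)).symm
      _ ≤ ν (thickening (ε l) A) := by
          refine measure_mono ?_
          rw [Set.iUnion₂_subset_iff]
          intro p hp y hy
          obtain ⟨hpA, hppos, hple⟩ := ht p hp
          rw [Metric.mem_thickening_iff]
          refine ⟨p.1, hpA, ?_⟩
          rw [Metric.mem_ball] at hy
          have := hεpos l
          calc dist y p.1 < p.2 := hy
            _ ≤ ε l / 2 := hple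
            _ < ε l := by linarith
  have step2 : ∀ l, k'' * prePacking α A ≤ ν (thickening (ε l) A) := by
    intro l
    refine le_trans (mul_le_mul_right ?_ k'') (step1 l)
    exact iInf₂_le (ε l) (hεpos l)
  have hε_anti : ∀ i j : ℕ, i ≤ j → thickening (ε j) A ⊆ thickening (ε i) A := by
    intro i j hij
    apply thickening_mono
    apply min_le_min le_rfl
    apply one_div_le_one_div_of_le (by positivity)
    exact_mod_cast add_le_add_left (Nat.cast_le.2 hij) 1
  have hiInter : (⋂ l, thickening (ε l) A) = closure A := by
    ext x
    simp only [Set.mem_iInter]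
    constructor
    · intro h
      rw [EMetric.mem_closure_iff_infEdist_zero]
      by_contra h0
      have hpos : 0 < EMetric.infEdist x A := pos_iff_ne_zero.2 h0
      obtain ⟨c, hc0, hcδ⟩ : ∃ c : ℝ, 0 < c ∧ ENNReal.ofReal c ≤ EMetric.infEdist x A := by
        rcases eq_or_ne (EMetric.infEdist x A) ⊤ with htop | htop
        · exact ⟨1, one_pos, by simp [htop]⟩
        · exact ⟨(EMetric.infEdist x A).toReal, ENNReal.toReal_pos h0 htop,
            by rw [ENNReal.ofReal_toReal htop]⟩
      obtain ⟨l, hl⟩ := exists_nat_one_div_lt hc0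
      have h1 : EMetric.infEdist x A < ENNReal.ofReal (ε l) :=
        Metric.mem_thickening_iff_infEdist_lt.1 (h l)
      have h2 : ENNReal.ofReal (ε l) ≤ ENNReal.ofReal c :=
        ENNReal.ofReal_le_ofReal ((min_le_right _ _).trans hl.le)
      exact absurd ((h1.trans_le h2).trans_le hcδ) (lt_irrefl _)
    · intro h l
      rw [Metric.mem_thickening_iff_infEdist_lt,
        EMetric.mem_closure_iff_infEdist_zero.1 h]
      exact ENNReal.ofReal_pos.2 (hεpos l)
  calc k'' * prePacking α A ≤ ⨅ l, ν (thickening (ε l) A) := le_iInf step2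
    _ = ν (⋂ l, thickening (ε l) A) := by
        refine (Directed.measure_iInter
          (fun l => isOpen_thickening.nullMeasurableSet) ?_
          ⟨0, measure_ne_top _ _⟩).symm
        intro i j
        exact ⟨max i j, hε_anti i (max i j) (le_max_left _ _),
          hε_anti j (max i j) (le_max_right _ _)⟩
    _ = ν (closure A) := by rw [hiInter]

end Aux

theorem packingMeasure_le_hausdorff_div_lower_density (n : ℕ) (α : ℝ) (hα : 0 ≤ α)
    (E : Set (EuclideanSpace ℝ (Fin n))) (hEfin : μH[α] E < ⊤)
    (k : ℝ≥0∞)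
    (hk : k = ⨅ x ∈ E, liminf (fun r : ℝ =>
      μH[α] (E ∩ Metric.ball x r) / ENNReal.ofReal ((2 * r) ^ α))
      (nhdsWithin 0 (Set.Ioi 0)))
    (hk0 : 0 < k) (hktop : k < ⊤) :
    packingMeasure α E ≤ μH[α] E / k ∧ μH[α] E / k < ⊤ := by
  classical
  obtain ⟨B, hEB, hBmeas, hBE⟩ := MeasureTheory.exists_measurable_superset (μH[α]) E
  set ν : Measure (EuclideanSpace ℝ (Fin n)) := (μH[α]).restrict B with hνdef
  haveI hνfin : IsFiniteMeasure ν :=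
    ⟨by rw [hνdef, Measure.restrict_apply_univ, hBE]; exact hEfin⟩
  have hagree : ∀ S : Set (EuclideanSpace ℝ (Fin n)), MeasurableSet S →
      μH[α] (E ∩ S) = ν S := by
    intro S hS
    rw [hνdef, Measure.restrict_apply hS]
    apply le_antisymm
    · exact measure_mono fun x hx => ⟨hx.2, hEB hx.1⟩
    · have h1 : μH[α] (B ∩ S) + μH[α] (B \ S) = μH[α] B := measure_inter_add_diff B hS
      have h2 : μH[α] B ≤ μH[α] (E ∩ S) + μH[α] (B \ S) := by
        rw [hBE]
        calc μH[α] E ≤ μH[α] ((E ∩ S) ∪ (E \ S)) := measure_mono (by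
              intro x hx
              by_cases h : x ∈ S
              · exact Set.mem_union_left _ (Set.mem_inter hx h)
              · exact Set.mem_union_right _ (Set.mem_diff_of_mem hx h))
          _ ≤ μH[α] (E ∩ S) + μH[α] (E \ S) := measure_union_le _ _
          _ ≤ μH[α] (E ∩ S) + μH[α] (B \ S) :=
              add_le_add_right (measure_mono fun x hx => Set.mem_diff_of_mem (hEB hx.1) hx.2) _
      have hfin' : μH[α] (B \ S) ≠ ⊤ :=
        ((measure_mono Set.diff_subset).trans_lt (hBE ▸ hEfin)).ne
      have h3 : μH[α] (B ∩ S) + μH[α] (B \ S) ≤ μH[α] (E ∩ S) + μH[α] (B \ S) :=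
        h1.le.trans h2
      rw [Set.inter_comm S B]
      exact (ENNReal.add_le_add_iff_right hfin').1 h3
  have hνuniv : ν univ = μH[α] E := by
    rw [hνdef, Measure.restrict_apply_univ, hBE]
  -- main estimate
  have main : ∀ k'' : ℝ≥0∞, k'' < k → k'' * packingMeasure α E ≤ μH[α] E := by
    intro k'' hk''
    have hk''top : k'' ≠ ⊤ := (hk''.trans hktop).ne
    set R : ℕ → ℝ := fun m => 1 / (m + 1) with hRdef
    have hRpos : ∀ m, 0 < R m := fun m => by positivity
    set G : ℕ → Set (EuclideanSpace ℝ (Fin n)) := fun m =>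
      {x | ∀ q : ℚ, 0 < (q : ℝ) → (q : ℝ) < R m →
        k'' * ENNReal.ofReal ((2 * (q : ℝ)) ^ α) ≤ ν (Metric.ball x (q : ℝ))} with hGdef
    have hGmeas : ∀ m, MeasurableSet (G m) := by
      intro m
      have : G m = ⋂ q : ℚ, {x : EuclideanSpace ℝ (Fin n) | 0 < (q : ℝ) → (q : ℝ) < R m →
          k'' * ENNReal.ofReal ((2 * (q : ℝ)) ^ α) ≤ ν (Metric.ball x (q : ℝ))} := by
        ext x; simp [hGdef, Set.mem_iInter]
      rw [this]
      refine MeasurableSet.iInter fun q => ?_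
      by_cases h1 : 0 < (q : ℝ)
      · by_cases h2 : (q : ℝ) < R m
        · simp only [h1, h2, forall_true_left]
          exact measurableSet_le measurable_const (measurable_measure_ball' ν _)
        · have : {x : EuclideanSpace ℝ (Fin n) | 0 < (q : ℝ) → (q : ℝ) < R m →
              k'' * ENNReal.ofReal ((2 * (q : ℝ)) ^ α) ≤ ν (Metric.ball x (q : ℝ))} = univ := by
            ext x; simp only [Set.mem_setOf_eq, Set.mem_univ, iff_true]
            intro _ hq2; exact absurd hq2 h2
          rw [this]; exact MeasurableSet.univ
      · have : {x : EuclideanSpace ℝ (Fin n) | 0 < (q : ℝ) → (q : ℝ) < R m →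
            k'' * ENNReal.ofReal ((2 * (q : ℝ)) ^ α) ≤ ν (Metric.ball x (q : ℝ))} = univ := by
          ext x; simp only [Set.mem_setOf_eq, Set.mem_univ, iff_true]
          intro hq1; exact absurd hq1 h1
        rw [this]; exact MeasurableSet.univ
    have hGball : ∀ m, ∀ x ∈ G m, ∀ r : ℝ, 0 < r → r < R m →
        k'' * ENNReal.ofReal ((2 * r) ^ α) ≤ ν (Metric.ball x r) := by
      intro m x hx r hr0 hrR
      -- rational approximation from below
      have hex : ∀ i : ℕ, ∃ q : ℚ, max (r / 2) (r - 1 / (i + 1)) < (q : ℝ) ∧ (q : ℝ) < r :=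
        fun i => exists_rat_btwn (max_lt (by linarith) (by
          have : (0:ℝ) < 1 / (i + 1) := by positivity
          linarith))
      choose q hq1 hq2 using hex
      have hqpos : ∀ i, 0 < (q i : ℝ) := fun i =>
        lt_of_le_of_lt (by positivity : (0:ℝ) ≤ r / 2) (lt_of_le_of_lt (le_max_left _ _) (hq1 i))
      have hqlt : ∀ i, (q i : ℝ) < R m := fun i => (hq2 i).trans hrR
      have hbound : ∀ i, k'' * ENNReal.ofReal ((2 * (q i : ℝ)) ^ α) ≤ ν (Metric.ball x r) :=
        fun i => (hx (q i) (hqpos i) (hqlt i)).trans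
          (measure_mono (Metric.ball_subset_ball (hq2 i).le))
      have hqtend : Tendsto (fun i : ℕ => (q i : ℝ)) atTop (nhds r) := by
        have hlow : Tendsto (fun i : ℕ => r - 1 / (i + 1 : ℝ)) atTop (nhds r) := by
          have := tendsto_one_div_add_atTop_nhds_zero_nat (𝕜 := ℝ)
          simpa using tendsto_const_nhds.sub this
        refine tendsto_of_tendsto_of_tendsto_of_le_of_le hlow tendsto_const_nhds
          (fun i => ?_) (fun i => (hq2 i).le)
        exact ((le_max_right _ _).trans (hq1 i).le)
      have htend : Tendsto (fun i : ℕ => k'' * ENNReal.ofReal ((2 * (q i : ℝ)) ^ α)) atTop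
          (nhds (k'' * ENNReal.ofReal ((2 * r) ^ α))) := by
        apply ENNReal.Tendsto.const_mul _ (Or.inr hk''top)
        apply (ENNReal.continuous_ofReal.continuousAt.tendsto).comp
        have hc : ContinuousAt (fun s : ℝ => (2 * s) ^ α) r := by
          have h1 : ContinuousAt (fun y : ℝ => y ^ α) (2 * r) :=
            Real.continuousAt_rpow_const _ _ (Or.inl (by positivity))
          exact h1.comp ((continuous_const.mul continuous_id).continuousAt)
        exact hc.tendsto.comp hqtend
      exact le_of_tendsto htend (Filter.Eventually.of_forall hbound)
    have hEG : E ⊆ ⋃ m, G m := by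
      intro x hx
      have hkle : k ≤ liminf (fun r : ℝ =>
          μH[α] (E ∩ Metric.ball x r) / ENNReal.ofReal ((2 * r) ^ α))
          (nhdsWithin 0 (Set.Ioi 0)) := by
        rw [hk]; exact iInf₂_le x hx
      have hev : ∀ᶠ r in nhdsWithin (0:ℝ) (Set.Ioi 0), k'' <
          μH[α] (E ∩ Metric.ball x r) / ENNReal.ofReal ((2 * r) ^ α) :=
        eventually_lt_of_lt_liminf (hk''.trans_le hkle)
      obtain ⟨u, hu0, huIoo⟩ := mem_nhdsGT_iff_exists_Ioo_subset.1 hev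
      obtain ⟨m, hm⟩ := exists_nat_one_div_lt (show (0:ℝ) < u from hu0)
      refine Set.mem_iUnion.2 ⟨m, ?_⟩
      intro qq hq0 hqR
      have hqu : (qq : ℝ) ∈ Set.Ioo (0:ℝ) u := ⟨hq0, hqR.trans hm⟩
      have := huIoo hqu
      simp only [Set.mem_setOf_eq] at this
      rw [hagree _ measurableSet_ball] at this
      have hb0 : ENNReal.ofReal ((2 * (qq : ℝ)) ^ α) ≠ 0 :=
        (ENNReal.ofReal_pos.2 (Real.rpow_pos_of_pos (by linarith) _)).ne'
      exact (ENNReal.le_div_iff_mul_le (Or.inl hb0) (Or.inl ENNReal.ofReal_ne_top)).1 this.le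
    -- estimate with slack
    have est : ∀ η : ℝ≥0∞, η ≠ 0 → η ≠ ⊤ →
        k'' * packingMeasure α E ≤ μH[α] E + 2 * η := by
      intro η hη0 hηtop
      set G' : ℕ → Set (EuclideanSpace ℝ (Fin n)) := disjointed G with hG'def
      have hG'meas : ∀ m, MeasurableSet (G' m) := MeasurableSet.disjointed hGmeas
      have hU : ∀ m : ℕ, ∃ U ⊇ G' m, IsOpen U ∧ ν U < ν (G' m) + η * 2⁻¹ ^ m := by
        intro m
        refine Set.exists_isOpen_lt_of_lt _ _ ?_
        exact ENNReal.lt_add_right (measure_ne_top _ _)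
          (mul_ne_zero hη0 (pow_ne_zero _ (by norm_num)))
      choose U hGU hUopen hUlt using hU
      have hdec := fun m => exists_decomp ν (G' m) (U m) (hGU m) (hUopen m)
      choose P hPsub hPcov hPsum using hdec
      set e : ℕ × ℕ ≃ ℕ := Denumerable.eqv (ℕ × ℕ) with hedef
      set c : ℕ → Set (EuclideanSpace ℝ (Fin n)) :=
        fun i => P (e.symm i).1 (e.symm i).2 with hcdef
      have hcover : E ⊆ ⋃ i, c i := by
        intro x hx
        have hx1 : x ∈ ⋃ m, G' m := by
          rw [hG'def, iUnion_disjointed]; exact hEG hx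
        obtain ⟨m, hm⟩ := Set.mem_iUnion.1 hx1
        obtain ⟨j, hj⟩ := Set.mem_iUnion.1 (hPcov m hm)
        refine Set.mem_iUnion.2 ⟨e (m, j), ?_⟩
        rw [hcdef]
        simp only [Equiv.symm_apply_apply]
        exact hj
      have h1 : packingMeasure α E ≤ ∑' i, prePacking α (c i) := by
        rw [packingMeasure]
        exact iInf₂_le c hcover
      have h4 : ∀ p : ℕ × ℕ, k'' * prePacking α (P p.1 p.2) ≤ ν (closure (P p.1 p.2)) := by
        intro p
        refine mul_prePacking_le ν α k'' (hRpos p.1) _ ?_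
        intro x hxP r hr0 hrR
        exact hGball p.1 x (disjointed_subset G p.1 (hPsub p.1 p.2 hxP)) r hr0 hrR
      calc k'' * packingMeasure α E ≤ k'' * ∑' i, prePacking α (c i) :=
            mul_le_mul_right h1 k''
        _ = ∑' i, k'' * prePacking α (c i) := ENNReal.tsum_mul_left.symm
        _ = ∑' p : ℕ × ℕ, k'' * prePacking α (P p.1 p.2) := by
            rw [← Equiv.tsum_eq e.symm (fun p : ℕ × ℕ => k'' * prePacking α (P p.1 p.2))]
        _ ≤ ∑' p : ℕ × ℕ, ν (closure (P p.1 p.2)) := ENNReal.tsum_le_tsum h4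
        _ = ∑' m, ∑' j, ν (closure (P m j)) := ENNReal.tsum_prod (f := fun m j => ν (closure (P m j)))
        _ ≤ ∑' m, (ν (G' m) + η * 2⁻¹ ^ m) :=
            ENNReal.tsum_le_tsum fun m => (hPsum m).trans (hUlt m).le
        _ = ∑' m, ν (G' m) + η * ∑' m : ℕ, (2⁻¹ : ℝ≥0∞) ^ m := by
            rw [ENNReal.tsum_add, ENNReal.tsum_mul_left]
        _ ≤ ν univ + η * 2 := by
            gcongr
            · rw [← measure_iUnion (disjoint_disjointed G) hG'meas]
              exact measure_mono (subset_univ _)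
            · rw [ENNReal.tsum_geometric]
              norm_num
        _ = μH[α] E + 2 * η := by rw [hνuniv, mul_comm]
    -- remove slack
    apply ENNReal.le_of_forall_pos_le_add
    intro ε' hε' _
    have h2ne : (2 : ℝ≥0∞) ≠ 0 := by norm_num
    have h2net : (2 : ℝ≥0∞) ≠ ⊤ := by norm_num
    have := est ((ε' : ℝ≥0∞) / 2)
      (by
        apply ENNReal.div_ne_zero.2
        exact ⟨by exact_mod_cast hε'.ne', h2net⟩)
      ((ENNReal.div_lt_top ENNReal.coe_ne_top h2ne).ne)
    rwa [ENNReal.mul_div_cancel' (fun h => absurd h h2ne) (fun h => absurd h h2net)] at this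
  -- conclude
  have hPk : packingMeasure α E * k ≤ μH[α] E := by
    apply ENNReal.le_of_forall_lt_one_mul_le
    intro a ha
    have hak : a * k < k := by
      calc a * k < 1 * k := (ENNReal.mul_lt_mul_iff_left hk0.ne' hktop.ne).2 ha
        _ = k := one_mul k
    calc a * (packingMeasure α E * k) = (a * k) * packingMeasure α E := by ring
      _ ≤ μH[α] E := main (a * k) hak
  constructor
  · exact (ENNReal.le_div_iff_mul_le (Or.inl hk0.ne') (Or.inl hktop.ne)).2 hPk
  · exact ENNReal.div_lt_top hEfin.ne hk0.ne'
end

section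
/- With K, M, α = nβ as in the Salem-set construction, there exists a constant c > 0 such that H_α(M ∩ B_r(x)) ≥ c·r^α for every x ∈ M and every 0 < r < 1. -/
open Metric Set MeasureTheory Filter ENNReal

/-- The product `η₁ η₂ ⋯ η_j` of the first `j` contraction ratios. -/
noncomputable def ratioProd (ηs : ℕ → ℝ) (j : ℕ) : ℝ :=
  ∏ m ∈ Finset.range j, ηs (m + 1)

/-- The `j`-th stage `K_j` of the Salem-type Cantor construction: the union of the
`N^j` intervals `[∑ a_{w i} η₁⋯η_i , ∑ a_{w i} η₁⋯η_i + η₁⋯η_j]` over all words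
`w : Fin j → Fin N`. -/
noncomputable def salemStage (N : ℕ) (a : Fin N → ℝ) (ηs : ℕ → ℝ) (j : ℕ) : Set ℝ :=
  {x | ∃ w : Fin j → Fin N,
    x ∈ Set.Icc (∑ i : Fin j, a (w i) * ratioProd ηs (i : ℕ))
      ((∑ i : Fin j, a (w i) * ratioProd ηs (i : ℕ)) + ratioProd ηs j)}

/-- The Salem-type Cantor set `K = ⋂_j K_j`. -/
noncomputable def salemSet (N : ℕ) (a : Fin N → ℝ) (ηs : ℕ → ℝ) : Set ℝ :=
  ⋂ j, salemStage N a ηs j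

/-- The `n`-fold cartesian product `M = K × ⋯ × K ⊆ ℝⁿ`. -/
noncomputable def salemCube (n N : ℕ) (a : Fin N → ℝ) (ηs : ℕ → ℝ) :
    Set (EuclideanSpace ℝ (Fin n)) :=
  {x | ∀ i, x i ∈ salemSet N a ηs}

open Topology

namespace SalemAux

noncomputable def digitF (N : ℕ) [NeZero N] (i : ℕ) (y : ℝ) : Fin N :=
  ⟨(⌊(N:ℝ)^(i+1) * y⌋ % N).toNat, by
    have hNz : ((N:ℤ)) ≠ 0 := by exact_mod_cast NeZero.ne N
    have h1 := Int.emod_lt_of_pos (⌊(N:ℝ)^(i+1) * y⌋) (by omega : 0 < (N:ℤ))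
    have h2 := Int.emod_nonneg (⌊(N:ℝ)^(i+1) * y⌋) hNz
    omega⟩

lemma digitF_measurable (N : ℕ) [NeZero N] (i : ℕ) : Measurable (digitF N i) := by
  apply measurable_to_countable'
  intro k
  have : (fun y => digitF N i y) ⁻¹' {k} =
      (fun y : ℝ => ⌊(N:ℝ)^(i+1) * y⌋) ⁻¹' {z | (z % N).toNat = (k:ℕ)} := by
    ext y; simp [digitF, Fin.ext_iff]
  rw [show digitF N i ⁻¹' {k} = _ from this]
  exact (Int.measurable_floor.comp (measurable_const.mul measurable_id))
    MeasurableSpace.measurableSet_top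

lemma cyl_eq (N : ℕ) [NeZero N] (j : ℕ) (w : Fin j → Fin N) :
    ∃ m : ℕ, m + 1 ≤ N^j ∧
      {y ∈ Ico (0:ℝ) 1 | ∀ i : Fin j, digitF N (i:ℕ) y = w i} =
        Ico ((m:ℝ)/(N:ℝ)^j) (((m:ℝ)+1)/(N:ℝ)^j) := by
  have hN0 : 0 < N := Nat.pos_of_ne_zero (NeZero.ne N)
  have hNR : (0:ℝ) < (N:ℝ) := by exact_mod_cast hN0
  induction j with
  | zero =>
      refine ⟨0, by norm_num, ?_⟩
      ext y; simp
  | succ j ih =>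
      obtain ⟨m, hm, hset⟩ := ih (fun i => w i.castSucc)
      set d : ℕ := (w (Fin.last j) : ℕ) with hd
      have hdN : d < N := (w (Fin.last j)).2
      refine ⟨m * N + d, ?_, ?_⟩
      · have : N^j * N = N^(j+1) := (pow_succ N j).symm
        nlinarith [hm, hdN]
      have hpow : (0:ℝ) < (N:ℝ)^(j+1) := by positivity
      have hpowj : (0:ℝ) < (N:ℝ)^j := by positivity
      have key : ∀ y ∈ Ico ((m:ℝ)/(N:ℝ)^j) (((m:ℝ)+1)/(N:ℝ)^j),
          (digitF N j y = w (Fin.last j) ↔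
            y ∈ Ico (((m*N+d : ℕ):ℝ)/(N:ℝ)^(j+1)) ((((m*N+d : ℕ):ℝ)+1)/(N:ℝ)^(j+1))) := by
        intro y hy
        set x := (N:ℝ)^(j+1) * y with hx
        have hx1 : ((N:ℤ)*m : ℝ) ≤ x := by
          have h1 := hy.1; rw [div_le_iff₀ hpowj] at h1
          push_cast
          calc ((N:ℝ) * m) = (m:ℝ) * (N:ℝ) := by ring
            _ ≤ ((N:ℝ)^j * y) * (N:ℝ) := by nlinarith
            _ = x := by rw [hx, pow_succ]; ring
        have hx2 : x < ((N:ℤ)*m : ℝ) + N := by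
          have h2 := hy.2; rw [lt_div_iff₀ hpowj] at h2
          push_cast
          calc x = ((N:ℝ)^j * y) * N := by rw [hx, pow_succ]; ring
            _ < ((m:ℝ)+1) * N := by nlinarith
            _ = (N:ℝ)*m + N := by ring
        have hfl : ((N:ℤ)*m ≤ ⌊x⌋) := Int.le_floor.2 (by exact_mod_cast hx1)
        have hfu : (⌊x⌋ < (N:ℤ)*m + N) := by
          rw [Int.floor_lt]; exact_mod_cast hx2
        have hmod : ⌊x⌋ % (N:ℤ) = ⌊x⌋ - N*m := by
          rw [show ⌊x⌋ = (⌊x⌋ - (N:ℤ)*m) + (N:ℤ)*m from by ring]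
          rw [Int.add_mul_emod_self_left]
          rw [Int.emod_eq_of_lt (by omega) (by omega)]
          omega
        constructor
        · intro h
          have hv : (⌊x⌋ % N).toNat = d := by
            have := congrArg Fin.val h
            simpa [digitF, hx] using this
          have hfe : ⌊x⌋ = N*m + d := by omega
          have h1 : ((N*m+d : ℤ) : ℝ) ≤ x := by rw [← hfe]; exact Int.floor_le x
          have h2 : x < ((N*m+d : ℤ) : ℝ) + 1 := by rw [← hfe]; exact Int.lt_floor_add_one x
          constructor
          · rw [div_le_iff₀ hpow]; push_cast at h1 ⊢; nlinarith
          · rw [lt_div_iff₀ hpow]; push_cast at h2 ⊢; nlinarith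
        · intro hy'
          have h1 : ((N*m+d : ℤ) : ℝ) ≤ x := by
            have := hy'.1; rw [div_le_iff₀ hpow] at this; push_cast at this ⊢; nlinarith
          have h2 : x < ((N*m+d : ℤ) : ℝ) + 1 := by
            have := hy'.2; rw [lt_div_iff₀ hpow] at this; push_cast at this ⊢; nlinarith
          have hfe : ⌊x⌋ = N*m + d := by
            rw [Int.floor_eq_iff]
            constructor
            · exact_mod_cast h1
            · push_cast at h2 ⊢; linarith
          apply Fin.ext
          have hmd : ((N:ℤ)*m + d) % N = d := by
            rw [show (N:ℤ)*↑m+↑d = (d:ℤ) + (N:ℤ)*↑m from by ring, Int.add_mul_emod_self_left]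
            exact Int.emod_eq_of_lt (by omega) (by omega)
          simp only [digitF, ← hx, hfe, hmd, Int.toNat_natCast]
          exact hd
      ext y
      constructor
      · rintro ⟨hy01, hdig⟩
        have hyIco : y ∈ Ico ((m:ℝ)/(N:ℝ)^j) (((m:ℝ)+1)/(N:ℝ)^j) := by
          rw [← hset]
          exact ⟨hy01, fun i => by simpa using hdig i.castSucc⟩
        exact (key y hyIco).1 (by simpa using hdig (Fin.last j))
      · intro hy'
        simp only [mem_Ico] at hy'
        have hyIco : y ∈ Ico ((m:ℝ)/(N:ℝ)^j) (((m:ℝ)+1)/(N:ℝ)^j) := by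
          constructor
          · refine le_trans ?_ hy'.1
            rw [div_le_div_iff₀ hpowj hpow]
            push_cast
            rw [pow_succ]
            nlinarith
          · refine lt_of_lt_of_le hy'.2 ?_
            rw [div_le_div_iff₀ hpow hpowj]
            push_cast
            rw [pow_succ]
            have hd1 : ((d:ℝ)+1) ≤ (N:ℝ) := by exact_mod_cast hdN
            nlinarith [hpowj.le, mul_le_mul_of_nonneg_right hd1 hpowj.le]
        have h01 := hset ▸ hyIco
        obtain ⟨hy01, hdig⟩ := h01
        refine ⟨hy01, ?_⟩
        intro i
        refine Fin.lastCases ?_ (fun i => ?_) i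
        · exact (key y hyIco).2 (by simpa using hy')
        · simpa using hdig i


lemma rp_pos {ηs : ℕ → ℝ} (hηpos : ∀ j, 0 < ηs j) (j : ℕ) : 0 < ratioProd ηs j :=
  Finset.prod_pos fun m _ => hηpos (m+1)

lemma rp_succ (ηs : ℕ → ℝ) (j : ℕ) :
    ratioProd ηs (j+1) = ratioProd ηs j * ηs (j+1) := Finset.prod_range_succ _ _

lemma rp_add_le {ηs : ℕ → ℝ} {η : ℝ} (hηpos : ∀ j, 0 < ηs j) (hηub : ∀ j, ηs j ≤ η)
    (j i : ℕ) : ratioProd ηs (j + i) ≤ ratioProd ηs j * η ^ i := by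
  induction i with
  | zero => simp [le_refl]
  | succ i ih =>
      have h1 : ratioProd ηs (j+i+1) = ratioProd ηs (j+i) * ηs (j+i+1) := rp_succ ηs _
      rw [show j + (i+1) = j+i+1 from rfl, h1, pow_succ]
      have hp := rp_pos hηpos (j+i)
      have hη0' : 0 < η := lt_of_lt_of_le (hηpos 0) (hηub 0)
      calc ratioProd ηs (j+i) * ηs (j+i+1) ≤ (ratioProd ηs j * η^i) * η := by
            apply mul_le_mul ih (hηub _) (hηpos _).le
            exact le_of_lt (mul_pos (rp_pos hηpos j) (pow_pos hη0' i))
        _ = ratioProd ηs j * (η^i * η) := by ring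

lemma rp_le {ηs : ℕ → ℝ} {η : ℝ} (hηpos : ∀ j, 0 < ηs j) (hηub : ∀ j, ηs j ≤ η)
    (j : ℕ) : ratioProd ηs j ≤ η ^ j := by
  simpa [ratioProd] using rp_add_le hηpos hηub 0 j

lemma rp_sum_le {ηs : ℕ → ℝ} {η : ℝ} (hηpos : ∀ j, 0 < ηs j) (hηub : ∀ j, ηs j ≤ η)
    (hη1 : η < 1) (k l : ℕ) :
    ∑ t ∈ Finset.range l, ratioProd ηs (k + t) ≤
      ratioProd ηs k * ((1 - η ^ l)/(1 - η)) := by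
  have h1η : (0:ℝ) < 1 - η := by linarith
  induction l with
  | zero => simp
  | succ l ih =>
      rw [Finset.sum_range_succ]
      have h2 := rp_add_le hηpos hηub k l
      have hp := rp_pos hηpos k
      calc ∑ t ∈ Finset.range l, ratioProd ηs (k + t) + ratioProd ηs (k + l)
          ≤ ratioProd ηs k * ((1 - η ^ l)/(1 - η)) + ratioProd ηs k * η ^ l :=
            add_le_add ih h2
        _ = ratioProd ηs k * ((1 - η ^ (l+1))/(1 - η)) := by
            field_simp
            ring

lemma prod_one_sub (j : ℕ) :
    ∏ m ∈ Finset.range j, (1 - 1/((m:ℝ)+2)^2) = ((j:ℝ)+2)/(2*((j:ℝ)+1)) := by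
  induction j with
  | zero => norm_num
  | succ j ih =>
      rw [Finset.prod_range_succ, ih]
      have h1 : ((j:ℝ)+1) ≠ 0 := by positivity
      have h2 : ((j:ℝ)+2) ≠ 0 := by positivity
      push_cast
      field_simp
      ring

lemma rp_ge {ηs : ℕ → ℝ} {η : ℝ} (hη0 : 0 < η)
    (hηlb : ∀ j : ℕ, η * (1 - 1 / ((j : ℝ) + 1) ^ 2) ≤ ηs j) (j : ℕ) :
    η ^ j / 2 ≤ ratioProd ηs j := by
  have key : ∀ m ∈ Finset.range j, η * (1 - 1/((m:ℝ)+2)^2) ≤ ηs (m+1) := by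
    intro m _
    have := hηlb (m+1)
    push_cast at this ⊢
    convert this using 3 <;> ring
  have h0 : ∀ m ∈ Finset.range j, (0:ℝ) ≤ η * (1 - 1/((m:ℝ)+2)^2) := by
    intro m _
    have h2 : (1:ℝ) ≤ ((m:ℝ)+2)^2 := by nlinarith [Nat.cast_nonneg (α := ℝ) m]
    have : 1/((m:ℝ)+2)^2 ≤ 1 := by
      rw [div_le_one (by positivity)]; exact h2
    nlinarith
  calc η ^ j / 2 ≤ η ^ j * (((j:ℝ)+2)/(2*((j:ℝ)+1))) := by
        have hj1 : (0:ℝ) < (j:ℝ)+1 := by positivity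
        have h12 : (1:ℝ)/2 ≤ ((j:ℝ)+2)/(2*((j:ℝ)+1)) := by
          rw [div_le_div_iff₀ (by norm_num) (by positivity)]
          nlinarith
        have hp : (0:ℝ) ≤ η ^ j := by positivity
        calc η ^ j / 2 = η ^ j * (1/2) := by ring
          _ ≤ η ^ j * (((j:ℝ)+2)/(2*((j:ℝ)+1))) := mul_le_mul_of_nonneg_left h12 hp
    _ = ∏ m ∈ Finset.range j, (η * (1 - 1/((m:ℝ)+2)^2)) := by
        rw [Finset.prod_mul_distrib, Finset.prod_const, Finset.card_range, prod_one_sub]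
    _ ≤ ratioProd ηs j := Finset.prod_le_prod h0 key

/-- endpoint of the interval indexed by word `w`. -/
noncomputable def ep {N : ℕ} (a : Fin N → ℝ) (ηs : ℕ → ℝ) {j : ℕ} (w : Fin j → Fin N) : ℝ :=
  ∑ i : Fin j, a (w i) * ratioProd ηs (i : ℕ)

/-- the coding map. -/
noncomputable def phi {N : ℕ} [NeZero N] (a : Fin N → ℝ) (ηs : ℕ → ℝ) : ℝ → ℝ :=
  fun y => ∑' i, a (digitF N i y) * ratioProd ηs i

variable {N : ℕ} [NeZero N] {a : Fin N → ℝ} {ηs : ℕ → ℝ} {η β : ℝ}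

lemma phi_summable (hηpos : ∀ j, 0 < ηs j) (hηub : ∀ j, ηs j ≤ η) (hη0 : 0 < η)
    (hη1 : η < 1) (ha0 : ∀ k, 0 ≤ a k) (ha1 : ∀ k, a k ≤ 1 - η) (y : ℝ) :
    Summable (fun i => a (digitF N i y) * ratioProd ηs i) := by
  apply Summable.of_nonneg_of_le
    (fun i => mul_nonneg (ha0 _) (rp_pos hηpos i).le)
    (fun i => ?_) (Summable.mul_left (1-η) (summable_geometric_of_lt_one hη0.le hη1))
  calc a (digitF N i y) * ratioProd ηs i ≤ (1-η) * ratioProd ηs i :=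
        mul_le_mul_of_nonneg_right (ha1 _) (rp_pos hηpos i).le
    _ ≤ (1-η) * η ^ i :=
        mul_le_mul_of_nonneg_left (rp_le hηpos hηub i) (by linarith)

set_option maxHeartbeats 1000000 in
lemma phi_mem (hηpos : ∀ j, 0 < ηs j) (hηub : ∀ j, ηs j ≤ η) (hη0 : 0 < η)
    (hη1 : η < 1) (ha0 : ∀ k, 0 ≤ a k) (ha1 : ∀ k, a k ≤ 1 - η) (y : ℝ) (j : ℕ) :
    phi a ηs y ∈ Icc (ep a ηs (fun i : Fin j => digitF N (i:ℕ) y))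
      (ep a ηs (fun i : Fin j => digitF N (i:ℕ) y) + ratioProd ηs j) := by
  have hsum := phi_summable hηpos hηub hη0 hη1 ha0 ha1 (y := y)
  have hsplit := hsum.sum_add_tsum_nat_add j
  have hep : ep a ηs (fun i : Fin j => digitF N (i:ℕ) y) =
      ∑ i ∈ Finset.range j, a (digitF N i y) * ratioProd ηs i := by
    rw [ep]
    exact Fin.sum_univ_eq_sum_range (fun i => a (digitF N i y) * ratioProd ηs i) j
  have htail0 : 0 ≤ ∑' i, a (digitF N (i + j) y) * ratioProd ηs (i + j) :=
    tsum_nonneg fun i => mul_nonneg (ha0 _) (rp_pos hηpos _).le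
  have htail1 : ∑' i, a (digitF N (i + j) y) * ratioProd ηs (i + j) ≤ ratioProd ηs j := by
    have hs2 : Summable (fun i : ℕ => (1-η) * (ratioProd ηs j * η ^ i)) :=
      Summable.mul_left _ (Summable.mul_left _ (summable_geometric_of_lt_one hη0.le hη1))
    have hsum' : Summable (fun i : ℕ => a (digitF N (i + j) y) * ratioProd ηs (i + j)) :=
      (summable_nat_add_iff (f := fun i => a (digitF N i y) * ratioProd ηs i) j).2 hsum
    calc ∑' i, a (digitF N (i + j) y) * ratioProd ηs (i + j)
        ≤ ∑' i, (1-η) * (ratioProd ηs j * η ^ i) := by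
          apply Summable.tsum_le_tsum _ hsum' hs2
          intro i
          have h1 : a (digitF N (i+j) y) * ratioProd ηs (i+j) ≤
              (1-η) * ratioProd ηs (i+j) :=
            mul_le_mul_of_nonneg_right (ha1 _) (rp_pos hηpos _).le
          have h2 : ratioProd ηs (i+j) ≤ ratioProd ηs j * η ^ i := by
            rw [add_comm]; exact rp_add_le hηpos hηub j i
          calc a (digitF N (i+j) y) * ratioProd ηs (i+j) ≤ (1-η) * ratioProd ηs (i+j) := h1
            _ ≤ (1-η) * (ratioProd ηs j * η ^ i) :=
                mul_le_mul_of_nonneg_left h2 (by linarith)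
      _ = (1-η) * (ratioProd ηs j * (1-η)⁻¹) := by
          rw [tsum_mul_left, tsum_mul_left, tsum_geometric_of_lt_one hη0.le hη1]
      _ = ratioProd ηs j := by
          have : (1:ℝ) - η ≠ 0 := by linarith
          field_simp
  constructor
  · rw [phi, ← hsplit, hep]; linarith
  · rw [phi, ← hsplit, hep]; linarith

lemma sep_core (hηpos : ∀ j, 0 < ηs j) (hηub : ∀ j, ηs j ≤ η) (hη0 : 0 < η)
    (hη1 : η < 1) (ha0 : ∀ k, 0 ≤ a k) (ha1 : ∀ k, a k ≤ 1 - η)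
    (j : ℕ) (u v : ℕ → Fin N) (k : ℕ) (hk : k ≤ j)
    (hagree : ∀ i, i < k → u i = v i) (hgap : η < a (v k) - a (u k)) :
    η * ratioProd ηs j ≤
      ∑ i ∈ Finset.range (j+1), a (v i) * ratioProd ηs i -
        ∑ i ∈ Finset.range (j+1), a (u i) * ratioProd ηs i := by
  have h1η : (0:ℝ) < 1 - η := by linarith
  set P := ratioProd ηs with hP
  set h : ℕ → ℝ := fun i => (a (v i) - a (u i)) * P i with hh
  have hdiff : ∑ i ∈ Finset.range (j+1), a (v i) * P i -
      ∑ i ∈ Finset.range (j+1), a (u i) * P i = ∑ i ∈ Finset.range (j+1), h i := by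
    rw [← Finset.sum_sub_distrib]
    exact Finset.sum_congr rfl fun i _ => by rw [hh]; ring
  rw [hdiff]
  have hsplit : ∑ i ∈ Finset.range (j+1), h i =
      ∑ i ∈ Finset.range k, h i + h k + ∑ t ∈ Finset.range (j - k), h (k+1+t) := by
    have e1 : ∑ i ∈ Finset.range (j+1), h i =
        ∑ i ∈ Finset.range k, h i + ∑ i ∈ Finset.Ico k (j+1), h i := by
      rw [Finset.range_eq_Ico, ← Finset.sum_Ico_consecutive _ (Nat.zero_le k) (by omega),
        ← Finset.range_eq_Ico]
    have e2 : ∑ i ∈ Finset.Ico k (j+1), h i = ∑ t ∈ Finset.range (j+1-k), h (k+t) := by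
      rw [Finset.sum_Ico_eq_sum_range]
    have e3 : j+1-k = (j-k)+1 := by omega
    have e4 : ∀ t : ℕ, h (k + (t+1)) = h (k+1+t) := fun t => by
      congr 1
      omega
    rw [e1, e2, e3, Finset.sum_range_succ']
    simp only [e4, Nat.add_zero]
    ring
  have hz : ∑ i ∈ Finset.range k, h i = 0 := by
    apply Finset.sum_eq_zero
    intro i hi
    rw [hh]
    simp only
    rw [hagree i (Finset.mem_range.1 hi)]
    ring
  have hk0 : η * P k ≤ h k := by
    rw [hh]
    simp only
    have := rp_pos hηpos k
    nlinarith
  have htail : -(P (k+1) * (1 - η^(j-k))) ≤ ∑ t ∈ Finset.range (j - k), h (k+1+t) := by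
    have hterm : ∀ t ∈ Finset.range (j-k), -((1-η) * P (k+1+t)) ≤ h (k+1+t) := by
      intro t _
      rw [hh]
      simp only
      have hpv := rp_pos hηpos (k+1+t)
      have b1 : 0 ≤ a (v (k+1+t)) := ha0 _
      have b2 : a (u (k+1+t)) ≤ 1 - η := ha1 _
      nlinarith
    calc -(P (k+1) * (1 - η^(j-k)))
        = -((1-η) * (P (k+1) * ((1 - η^(j-k))/(1-η)))) := by field_simp
      _ ≤ -((1-η) * ∑ t ∈ Finset.range (j-k), P (k+1+t)) := by
          apply neg_le_neg
          apply mul_le_mul_of_nonneg_left _ (by linarith)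
          have := rp_sum_le hηpos hηub hη1 (k+1) (j-k)
          calc ∑ t ∈ Finset.range (j-k), P (k+1+t) ≤
              P (k+1) * ((1 - η^(j-k))/(1-η)) := this
            _ = P (k+1) * ((1 - η^(j-k))/(1-η)) := rfl
      _ = ∑ t ∈ Finset.range (j-k), -((1-η) * P (k+1+t)) := by
          rw [Finset.mul_sum, ← Finset.sum_neg_distrib]
      _ ≤ ∑ t ∈ Finset.range (j - k), h (k+1+t) := Finset.sum_le_sum hterm
  rw [hsplit, hz, zero_add]
  have hPk1 : P (k+1) ≤ η * P k := by
    rw [hP, rp_succ]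
    have h3 := rp_pos hηpos k
    have h4 := hηub (k+1)
    nlinarith [hηpos (k+1)]
  rcases eq_or_lt_of_le hk with rfl | hkj
  · simp only [Nat.sub_self, Finset.range_zero, Finset.sum_empty, add_zero]
    exact hk0
  · have hjk : P j ≤ P (k+1) * η^(j-k-1) := by
      have := rp_add_le hηpos hηub (k+1) (j-k-1)
      rw [show k+1+(j-k-1) = j from by omega] at this
      exact this
    have hPk1pos := rp_pos hηpos (k+1)
    have hηpow : (0:ℝ) < η^(j-k-1) := by positivity
    have key : η * P j ≤ η * P k - P (k+1) * (1 - η^(j-k)) := by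
      have e : η^(j-k) = η^(j-k-1) * η := by
        rw [← pow_succ]
        congr 1
        omega
      have h5 : η * P j ≤ P (k+1) * η^(j-k) := by
        rw [e]
        nlinarith
      nlinarith
    linarith

lemma ep_sep (hηpos : ∀ j, 0 < ηs j) (hηub : ∀ j, ηs j ≤ η) (hη0 : 0 < η)
    (hη1 : η < 1) (ha0 : ∀ k, 0 ≤ a k) (ha1 : ∀ k, a k ≤ 1 - η)
    (hsep : ∀ k l : Fin N, k ≠ l → η < |a k - a l|)
    {j : ℕ} {w w' : Fin (j+1) → Fin N} (hne : w ≠ w') :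
    η * ratioProd ηs j ≤ |ep a ηs w - ep a ηs w'| := by
  classical
  set u : ℕ → Fin N := fun i => if h : i < j+1 then w ⟨i, h⟩ else w 0 with hu
  set v : ℕ → Fin N := fun i => if h : i < j+1 then w' ⟨i, h⟩ else w 0 with hv
  have hepu : ep a ηs w = ∑ i ∈ Finset.range (j+1), a (u i) * ratioProd ηs i := by
    rw [ep, ← Fin.sum_univ_eq_sum_range (fun i => a (u i) * ratioProd ηs i) (j+1)]
    apply Finset.sum_congr rfl
    intro i _
    rw [hu]
    simp [i.2]
  have hepv : ep a ηs w' = ∑ i ∈ Finset.range (j+1), a (v i) * ratioProd ηs i := by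
    rw [ep, ← Fin.sum_univ_eq_sum_range (fun i => a (v i) * ratioProd ηs i) (j+1)]
    apply Finset.sum_congr rfl
    intro i _
    rw [hv]
    simp [i.2]
  have hex : ∃ i, u i ≠ v i := by
    obtain ⟨i, hi⟩ := Function.ne_iff.1 hne
    refine ⟨(i:ℕ), ?_⟩
    rw [hu, hv]
    simpa [i.2, Fin.eta] using hi
  set k := Nat.find hex with hkdef
  have hkspec : u k ≠ v k := Nat.find_spec hex
  have hkmin : ∀ i, i < k → u i = v i := by
    intro i hi
    by_contra hne'
    have h1 : Nat.find hex ≤ i := Nat.find_le hne'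
    omega
  have hkj : k ≤ j := by
    by_contra hgt
    apply hkspec
    rw [hu, hv]
    have hnot : ¬ (k < j+1) := by omega
    simp [hnot]
  have hwk : η < |a (u k) - a (v k)| := hsep _ _ hkspec
  rcases abs_cases (a (u k) - a (v k)) with ⟨heq, _⟩ | ⟨heq, _⟩
  · have hgap : η < a (u k) - a (v k) := by rw [← heq]; exact hwk
    have hc := sep_core hηpos hηub hη0 hη1 ha0 ha1 j v u k hkj
      (fun i hi => (hkmin i hi).symm) hgap
    rw [hepu, hepv]
    calc η * ratioProd ηs j ≤ _ := hc
      _ ≤ |∑ i ∈ Finset.range (j+1), a (u i) * ratioProd ηs i -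
            ∑ i ∈ Finset.range (j+1), a (v i) * ratioProd ηs i| := le_abs_self _
  · have hgap : η < a (v k) - a (u k) := by
      have hre : -(a (u k) - a (v k)) = a (v k) - a (u k) := by ring
      rw [← hre, ← heq]; exact hwk
    have hc := sep_core hηpos hηub hη0 hη1 ha0 ha1 j u v k hkj hkmin hgap
    rw [hepu, hepv, abs_sub_comm]
    calc η * ratioProd ηs j ≤ _ := hc
      _ ≤ |∑ i ∈ Finset.range (j+1), a (v i) * ratioProd ηs i -
            ∑ i ∈ Finset.range (j+1), a (u i) * ratioProd ηs i| := le_abs_self _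

lemma card_sep {ι : Type*} (S : Finset ι) (f : ι → ℝ) (δ A B : ℝ) (hδ : 0 < δ)
    (hAB : A ≤ B)
    (hsep : ∀ i ∈ S, ∀ i' ∈ S, i ≠ i' → δ ≤ |f i - f i'|)
    (hmem : ∀ i ∈ S, f i ∈ Icc A B) : (S.card : ℝ) ≤ (B - A)/δ + 1 := by
  classical
  · set g : ι → ℤ := fun i => ⌊(f i - A)/δ⌋ with hg
    have hinj : Set.InjOn g S := by
      intro i hi i' hi' hgi
      by_contra hne
      have h1 := hsep i hi i' hi' hne
      have h2 : |(f i - A)/δ - (f i' - A)/δ| < 1 :=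
        Int.abs_sub_lt_one_of_floor_eq_floor hgi
      rw [div_sub_div_same] at h2
      have h3 : (f i - A) - (f i' - A) = f i - f i' := by ring
      rw [h3, abs_div, abs_of_pos hδ, div_lt_one hδ] at h2
      linarith
    have himg : S.image g ⊆ Finset.Icc 0 ⌊(B-A)/δ⌋ := by
      intro z hz
      obtain ⟨i, hi, rfl⟩ := Finset.mem_image.1 hz
      rw [Finset.mem_Icc]
      obtain ⟨h1, h2⟩ := hmem i hi
      constructor
      · exact Int.le_floor.2 (by
          push_cast
          exact div_nonneg (by linarith) hδ.le)
      · exact Int.floor_le_floor ((div_le_div_iff_of_pos_right hδ).2 (by linarith))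
    have hcard : S.card = (S.image g).card := (Finset.card_image_of_injOn hinj).symm
    have hle : (S.image g).card ≤ (Finset.Icc (0:ℤ) ⌊(B-A)/δ⌋).card := Finset.card_le_card himg
    rw [Int.card_Icc] at hle
    have hfl : (0:ℤ) ≤ ⌊(B-A)/δ⌋ := Int.le_floor.2 (by
      push_cast
      exact div_nonneg (by linarith) hδ.le)
    have hflle := Int.floor_le ((B-A)/δ)
    calc (S.card:ℝ) = ((S.image g).card : ℝ) := by rw [hcard]
      _ ≤ (((⌊(B-A)/δ⌋ + 1 - 0).toNat : ℤ) : ℝ) := by exact_mod_cast hle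
      _ = ((⌊(B-A)/δ⌋:ℝ) + 1) := by
          rw [Int.toNat_of_nonneg (by omega)]
          push_cast
          ring
      _ ≤ (B-A)/δ + 1 := by linarith

/-- the natural measure on the Cantor set. -/
noncomputable def mu (N : ℕ) [NeZero N] (a : Fin N → ℝ) (ηs : ℕ → ℝ) : Measure ℝ :=
  (volume.restrict (Ico 0 1)).map (phi a ηs)

lemma phi_measurable (hηpos : ∀ j, 0 < ηs j) (hηub : ∀ j, ηs j ≤ η) (hη0 : 0 < η)
    (hη1 : η < 1) (ha0 : ∀ k, 0 ≤ a k) (ha1 : ∀ k, a k ≤ 1 - η) :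
    Measurable (phi a ηs) := by
  apply measurable_of_tendsto_metrizable' (α := ℝ) (β := ℝ) atTop
    (f := fun n y => ∑ i ∈ Finset.range n, a (digitF N i y) * ratioProd ηs i)
  · intro n
    apply Finset.measurable_sum
    intro i _
    exact ((measurable_from_top (f := a)).comp (digitF_measurable N i)).mul_const _
  · rw [tendsto_pi_nhds]
    intro y
    exact (phi_summable hηpos hηub hη0 hη1 ha0 ha1 y).hasSum.tendsto_sum_nat

noncomputable def cylSet (N : ℕ) [NeZero N] (j : ℕ) (w : Fin j → Fin N) : Set ℝ :=
  {y ∈ Ico (0:ℝ) 1 | ∀ i : Fin j, digitF N (i:ℕ) y = w i}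

lemma volume_cylSet (j : ℕ) (w : Fin j → Fin N) :
    volume (cylSet N j w) = ENNReal.ofReal (((N:ℝ)^j)⁻¹) := by
  obtain ⟨m, hm, hset⟩ := cyl_eq N j w
  rw [cylSet, hset, Real.volume_Ico]
  congr 1
  have hNR : (0:ℝ) < (N:ℝ)^j := by
    have : 0 < N := Nat.pos_of_ne_zero (NeZero.ne N)
    positivity
  field_simp
  ring

lemma mu_J_ge (hηpos : ∀ j, 0 < ηs j) (hηub : ∀ j, ηs j ≤ η) (hη0 : 0 < η)
    (hη1 : η < 1) (ha0 : ∀ k, 0 ≤ a k) (ha1 : ∀ k, a k ≤ 1 - η) (j : ℕ)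
    (w : Fin j → Fin N) :
    ENNReal.ofReal (((N:ℝ)^j)⁻¹) ≤
      mu N a ηs (Icc (ep a ηs w) (ep a ηs w + ratioProd ηs j)) := by
  have hmeas := phi_measurable hηpos hηub hη0 hη1 ha0 ha1
  rw [mu, Measure.map_apply hmeas measurableSet_Icc,
    Measure.restrict_apply (measurableSet_Icc.preimage hmeas)]
  rw [← volume_cylSet j w]
  apply measure_mono
  intro y hy
  obtain ⟨hy01, hydig⟩ := hy
  have hw : (fun i : Fin j => digitF N (i:ℕ) y) = w := funext hydig
  constructor
  · have := phi_mem hηpos hηub hη0 hη1 ha0 ha1 y j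
    rw [hw] at this
    exact this
  · exact hy01

lemma mu_Icc_le (hηpos : ∀ j, 0 < ηs j) (hηub : ∀ j, ηs j ≤ η) (hη0 : 0 < η)
    (hη1 : η < 1) (ha0 : ∀ k, 0 ≤ a k) (ha1 : ∀ k, a k ≤ 1 - η)
    (hsep : ∀ k l : Fin N, k ≠ l → η < |a k - a l|)
    (u v : ℝ) (huv : u ≤ v) (j : ℕ)
    (h1 : ratioProd ηs (j+1) ≤ v - u) (h2 : v - u ≤ ratioProd ηs j) :
    mu N a ηs (Icc u v) ≤ ENNReal.ofReal ((2/η + 1) * ((N:ℝ)^(j+1))⁻¹) := by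
  classical
  have hmeas := phi_measurable hηpos hηub hη0 hη1 ha0 ha1
  have hPj := rp_pos hηpos j
  have hPj1 := rp_pos hηpos (j+1)
  set S : Finset (Fin (j+1) → Fin N) :=
    Finset.univ.filter
      (fun w => ((Icc (ep a ηs w) (ep a ηs w + ratioProd ηs (j+1))) ∩ Icc u v).Nonempty)
    with hS
  have hcov : phi a ηs ⁻¹' (Icc u v) ∩ Ico 0 1 ⊆ ⋃ w ∈ S, cylSet N (j+1) w := by
    rintro y ⟨hyphi, hy01⟩
    set w : Fin (j+1) → Fin N := fun i => digitF N (i:ℕ) y with hw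
    have hmem := phi_mem hηpos hηub hη0 hη1 ha0 ha1 y (j+1)
    have hwS : w ∈ S := by
      rw [hS, Finset.mem_filter]
      exact ⟨Finset.mem_univ _, ⟨phi a ηs y, hmem, hyphi⟩⟩
    apply Set.mem_biUnion hwS
    exact ⟨hy01, fun i => rfl⟩
  have hμ : mu N a ηs (Icc u v) = volume (phi a ηs ⁻¹' Icc u v ∩ Ico 0 1) := by
    rw [mu, Measure.map_apply hmeas measurableSet_Icc,
      Measure.restrict_apply (measurableSet_Icc.preimage hmeas)]
  have hcard : (S.card : ℝ) ≤ 2/η + 1 := by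
    have := card_sep S (fun w => ep a ηs w) (η * ratioProd ηs j)
      (u - ratioProd ηs (j+1)) v (by positivity) (by nlinarith)
      (fun w hw w' hw' hne => ep_sep hηpos hηub hη0 hη1 ha0 ha1 hsep hne)
      (fun w hw => by
        rw [hS, Finset.mem_filter] at hw
        obtain ⟨z, ⟨hz1, hz2⟩⟩ := hw.2
        obtain ⟨hz3, hz4⟩ := hz1
        obtain ⟨hz5, hz6⟩ := hz2
        constructor
        · linarith
        · linarith)
    have hquot : (v - (u - ratioProd ηs (j+1)))/(η * ratioProd ηs j) + 1 ≤ 2/η + 1 := by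
      have hP1j : ratioProd ηs (j+1) ≤ ratioProd ηs j := by
        rw [rp_succ]
        nlinarith [hηpos (j+1), hηub (j+1)]
      have hnum : v - (u - ratioProd ηs (j+1)) ≤ 2 * ratioProd ηs j := by linarith
      have hq2 : (v - (u - ratioProd ηs (j+1)))/(η * ratioProd ηs j) ≤
          (2 * ratioProd ηs j)/(η * ratioProd ηs j) :=
        (div_le_div_iff_of_pos_right (by positivity)).2 hnum
      have hq3 : (2 * ratioProd ηs j)/(η * ratioProd ηs j) = 2/η := by
        rw [mul_comm η _, ← div_div]
        congr 1
        exact mul_div_cancel_right₀ 2 (ne_of_gt hPj)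
      linarith
    linarith
  calc mu N a ηs (Icc u v) = volume (phi a ηs ⁻¹' Icc u v ∩ Ico 0 1) := hμ
    _ ≤ volume (⋃ w ∈ S, cylSet N (j+1) w) := measure_mono hcov
    _ ≤ ∑ w ∈ S, volume (cylSet N (j+1) w) := measure_biUnion_finset_le S _
    _ = S.card • ENNReal.ofReal (((N:ℝ)^(j+1))⁻¹) := by
        rw [Finset.sum_congr rfl (fun w _ => volume_cylSet (j+1) w),
          Finset.sum_const]
    _ ≤ ENNReal.ofReal ((2/η + 1) * ((N:ℝ)^(j+1))⁻¹) := by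
        rw [nsmul_eq_mul, ← ENNReal.ofReal_natCast, ← ENNReal.ofReal_mul (by positivity)]
        apply ENNReal.ofReal_le_ofReal
        apply mul_le_mul_of_nonneg_right hcard
        have : 0 < N := Nat.pos_of_ne_zero (NeZero.ne N)
        positivity

lemma rp_zero (ηs : ℕ → ℝ) : ratioProd ηs 0 = 1 := by simp [ratioProd]

lemma pow_inv_eq (hη0 : 0 < η) (hN0 : 0 < N) (hNηβ : (N:ℝ) * η ^ (β:ℝ) = 1) (L : ℕ) :
    ((N:ℝ)^L)⁻¹ = (η^L) ^ (β:ℝ) := by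
  have hNR : (0:ℝ) < (N:ℝ) := by exact_mod_cast hN0
  have hinv : (N:ℝ)⁻¹ = η ^ (β:ℝ) := by
    field_simp at hNηβ ⊢
    linarith [hNηβ]
  rw [← inv_pow, hinv]
  rw [← Real.rpow_natCast (η ^ (β:ℝ)) L, ← Real.rpow_natCast η L]
  rw [← Real.rpow_mul hη0.le, ← Real.rpow_mul hη0.le]
  rw [mul_comm]

lemma mu_Icc_small (hN : 1 < N) (hηpos : ∀ j, 0 < ηs j) (hηub : ∀ j, ηs j ≤ η)
    (hη0 : 0 < η) (hη1 : η < 1) (ha0 : ∀ k, 0 ≤ a k) (ha1 : ∀ k, a k ≤ 1 - η)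
    (hsep : ∀ k l : Fin N, k ≠ l → η < |a k - a l|)
    (hβ0 : 0 < β) (hβ1 : β < 1) (hNηβ : (N:ℝ) * η ^ (β:ℝ) = 1)
    (hηlb : ∀ j : ℕ, η * (1 - 1 / ((j : ℝ) + 1) ^ 2) ≤ ηs j)
    (u v : ℝ) (huv : u ≤ v) (hd : v - u < 1) :
    mu N a ηs (Icc u v) ≤ ENNReal.ofReal ((2*(2/η+1)) * (v-u) ^ (β:ℝ)) := by
  have hN0 : 0 < N := by omega
  rcases lt_or_eq_of_le huv with hpos | rfl
  · -- positive length
    have hdpos : 0 < v - u := by linarith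
    have hex : ∃ L, ratioProd ηs L ≤ v - u := by
      obtain ⟨L₀, hL₀⟩ := exists_pow_lt_of_lt_one hdpos hη1
      exact ⟨L₀, le_trans (rp_le hηpos hηub L₀) hL₀.le⟩
    have hL := Nat.find_spec hex
    have hL1 : Nat.find hex ≠ 0 := by
      intro h0
      rw [h0, rp_zero] at hL
      linarith
    obtain ⟨j, hj⟩ := Nat.exists_eq_succ_of_ne_zero hL1
    have h1 : ratioProd ηs (j+1) ≤ v - u := by rw [hj] at hL; exact hL
    have h2 : v - u ≤ ratioProd ηs j := by
      have := Nat.find_min hex (m := j) (by omega)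
      push_neg at this
      linarith
    refine le_trans (mu_Icc_le hηpos hηub hη0 hη1 ha0 ha1 hsep u v huv j h1 h2) ?_
    apply ENNReal.ofReal_le_ofReal
    have hkey : ((N:ℝ)^(j+1))⁻¹ ≤ 2 * (v-u) ^ (β:ℝ) := by
      rw [pow_inv_eq hη0 hN0 hNηβ (j+1)]
      have e1 : η^(j+1) ≤ 2 * (v - u) := by
        have := rp_ge hη0 hηlb (j+1)
        linarith
      calc (η^(j+1)) ^ (β:ℝ) ≤ (2 * (v-u)) ^ (β:ℝ) :=
            Real.rpow_le_rpow (by positivity) e1 hβ0.le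
        _ = 2 ^ (β:ℝ) * (v-u) ^ (β:ℝ) := Real.mul_rpow (by norm_num) hdpos.le
        _ ≤ 2 * (v-u) ^ (β:ℝ) := by
            apply mul_le_mul_of_nonneg_right _ (by positivity)
            calc (2:ℝ) ^ (β:ℝ) ≤ 2 ^ (1:ℝ) :=
                  Real.rpow_le_rpow_of_exponent_le one_le_two hβ1.le
              _ = 2 := Real.rpow_one 2
    calc (2/η + 1) * ((N:ℝ)^(j+1))⁻¹ ≤ (2/η + 1) * (2 * (v-u) ^ (β:ℝ)) :=
          mul_le_mul_of_nonneg_left hkey (by positivity)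
      _ = (2*(2/η+1)) * (v-u) ^ (β:ℝ) := by ring
  · -- singleton
    have hmu0 : mu N a ηs {u} = 0 := by
      have hb : ∀ j : ℕ, mu N a ηs {u} ≤
          ENNReal.ofReal ((2/η + 1) * ((N:ℝ)^(j+1))⁻¹) := by
        intro j
        have hPj1 := rp_pos hηpos (j+1)
        have hPj := rp_pos hηpos j
        have hsub : {u} ⊆ Icc (u - ratioProd ηs (j+1)/2) (u + ratioProd ηs (j+1)/2) := by
          rw [singleton_subset_iff, mem_Icc]
          constructor <;> linarith
        have hlen : (u + ratioProd ηs (j+1)/2) - (u - ratioProd ηs (j+1)/2) =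
            ratioProd ηs (j+1) := by ring
        refine le_trans (measure_mono hsub)
          (mu_Icc_le hηpos hηub hη0 hη1 ha0 ha1 hsep _ _ (by linarith) j ?_ ?_)
        · rw [hlen]
        · rw [hlen]
          rw [rp_succ]
          nlinarith [hηpos (j+1), hηub (j+1)]
      have ht : Tendsto (fun j : ℕ => ENNReal.ofReal ((2/η + 1) * ((N:ℝ)^(j+1))⁻¹))
          atTop (𝓝 0) := by
        have hr : Tendsto (fun j : ℕ => (2/η + 1) * ((N:ℝ)^(j+1))⁻¹) atTop (𝓝 0) := by
          have h1 : Tendsto (fun j : ℕ => ((N:ℝ)^j)⁻¹) atTop (𝓝 0) :=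
            tendsto_inv_atTop_zero.comp
              (tendsto_pow_atTop_atTop_of_one_lt (by exact_mod_cast hN))
          have h2 : Tendsto (fun j : ℕ => ((N:ℝ)^(j+1))⁻¹) atTop (𝓝 0) :=
            h1.comp (tendsto_add_atTop_nat 1)
          have := h2.const_mul (2/η + 1)
          simpa using this
        have := ENNReal.tendsto_ofReal hr
        simpa using this
      have := ge_of_tendsto ht (Eventually.of_forall hb)
      exact le_antisymm this zero_le
    rw [Icc_self, hmu0]
    exact zero_le

lemma salemStage_closed (N : ℕ) (a : Fin N → ℝ) (ηs : ℕ → ℝ) (j : ℕ) :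
    IsClosed (salemStage N a ηs j) := by
  have : salemStage N a ηs j =
      ⋃ w : Fin j → Fin N, Icc (ep a ηs w) (ep a ηs w + ratioProd ηs j) := by
    ext x
    simp only [salemStage, mem_setOf_eq, mem_iUnion, ep]
  rw [this]
  exact isClosed_iUnion_of_finite fun w => isClosed_Icc

lemma salemSet_closed (N : ℕ) (a : Fin N → ℝ) (ηs : ℕ → ℝ) :
    IsClosed (salemSet N a ηs) :=
  isClosed_iInter fun j => salemStage_closed N a ηs j

lemma phi_mem_salemSet (hηpos : ∀ j, 0 < ηs j) (hηub : ∀ j, ηs j ≤ η) (hη0 : 0 < η)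
    (hη1 : η < 1) (ha0 : ∀ k, 0 ≤ a k) (ha1 : ∀ k, a k ≤ 1 - η) (y : ℝ) :
    phi a ηs y ∈ salemSet N a ηs := by
  rw [salemSet, mem_iInter]
  intro j
  exact ⟨fun i => digitF N (i:ℕ) y, phi_mem hηpos hηub hη0 hη1 ha0 ha1 y j⟩

lemma mu_compl_zero (hηpos : ∀ j, 0 < ηs j) (hηub : ∀ j, ηs j ≤ η) (hη0 : 0 < η)
    (hη1 : η < 1) (ha0 : ∀ k, 0 ≤ a k) (ha1 : ∀ k, a k ≤ 1 - η) :
    mu N a ηs (salemSet N a ηs)ᶜ = 0 := by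
  have hmeas := phi_measurable hηpos hηub hη0 hη1 ha0 ha1
  have hKmeas := (salemSet_closed N a ηs).measurableSet
  rw [mu, Measure.map_apply hmeas hKmeas.compl,
    Measure.restrict_apply (hKmeas.compl.preimage hmeas)]
  have hemp : phi a ηs ⁻¹' (salemSet N a ηs)ᶜ ∩ Ico 0 1 = ∅ := by
    rw [eq_empty_iff_forall_notMem]
    rintro y ⟨hc, _⟩
    exact hc (phi_mem_salemSet hηpos hηub hη0 hη1 ha0 ha1 y)
  rw [hemp, measure_empty]

lemma mu_ball_ge (hηpos : ∀ j, 0 < ηs j) (hηub : ∀ j, ηs j ≤ η) (hη0 : 0 < η)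
    (hη1 : η < 1) (ha0 : ∀ k, 0 ≤ a k) (ha1 : ∀ k, a k ≤ 1 - η)
    (t : ℝ) (ht : t ∈ salemSet N a ηs) (j : ℕ) (r : ℝ) (hr : ratioProd ηs j < r) :
    ENNReal.ofReal (((N:ℝ)^j)⁻¹) ≤ mu N a ηs (ball t r) := by
  have hstage : t ∈ salemStage N a ηs j := by
    rw [salemSet, mem_iInter] at ht
    exact ht j
  obtain ⟨w, hw⟩ := hstage
  have hsub : Icc (ep a ηs w) (ep a ηs w + ratioProd ηs j) ⊆ ball t r := by
    intro z hz
    rw [mem_ball, Real.dist_eq]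
    rw [mem_Icc] at hz hw
    rw [abs_lt]
    have hepw : ep a ηs w = ∑ i : Fin j, a (w i) * ratioProd ηs (i:ℕ) := rfl
    rw [hepw] at hz
    constructor <;> linarith
  exact le_trans (mu_J_ge hηpos hηub hη0 hη1 ha0 ha1 j w) (measure_mono hsub)

lemma mu_univ (hηpos : ∀ j, 0 < ηs j) (hηub : ∀ j, ηs j ≤ η) (hη0 : 0 < η)
    (hη1 : η < 1) (ha0 : ∀ k, 0 ≤ a k) (ha1 : ∀ k, a k ≤ 1 - η) :
    mu N a ηs univ = 1 := by
  have hmeas := phi_measurable hηpos hηub hη0 hη1 ha0 ha1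
  rw [mu, Measure.map_apply hmeas MeasurableSet.univ, preimage_univ,
    Measure.restrict_apply MeasurableSet.univ, univ_inter, Real.volume_Ico]
  norm_num

end SalemAux

open SalemAux in
theorem salemCube_hausdorff_lower_regular
    (n N : ℕ) (hn : 0 < n) (hN : 2 ≤ N) (β η : ℝ) (hβ0 : 0 < β) (hβ1 : β < 1)
    (hη0 : 0 < η) (hNη : (N : ℝ) * η < 1) (hNηβ : (N : ℝ) * η ^ β = 1)
    (a : Fin N → ℝ) (ha0 : ∀ k, 0 ≤ a k) (ha1 : ∀ k, a k ≤ 1 - η)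
    (hmono : StrictMono a) (hsep : ∀ k l, k ≠ l → η < |a k - a l|)
    (ηs : ℕ → ℝ) (hηpos : ∀ j, 0 < ηs j) (hηmono : Monotone ηs)
    (hηlb : ∀ j : ℕ, η * (1 - 1 / ((j : ℝ) + 1) ^ 2) ≤ ηs j) (hηub : ∀ j, ηs j ≤ η)
    :
    ∃ c : ℝ, 0 < c ∧ ∀ x ∈ salemCube n N a ηs, ∀ r : ℝ, 0 < r → r < 1 →
      ENNReal.ofReal (c * r ^ ((n : ℝ) * β)) ≤
        μH[(n : ℝ) * β] (salemCube n N a ηs ∩ Metric.ball x r) := by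
  classical
  haveI : NeZero N := ⟨by omega⟩
  have hNR : (2:ℝ) ≤ (N:ℝ) := by exact_mod_cast hN
  have hη1 : η < 1 := by nlinarith
  have hN1 : 1 < N := by omega
  set α : ℝ := (n:ℝ) * β with hα
  have hα0 : 0 ≤ α := by positivity
  set K := salemSet N a ηs with hK
  set M := salemCube n N a ηs with hM
  set μ : Measure ℝ := SalemAux.mu N a ηs with hμdef
  haveI : IsFiniteMeasure μ := ⟨by
    rw [hμdef, mu_univ hηpos hηub hη0 hη1 ha0 ha1]
    exact one_lt_top⟩
  set π : Measure (Fin n → ℝ) := Measure.pi (fun _ => μ) with hπdef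
  set e := (MeasurableEquiv.toLp 2 (Fin n → ℝ)).symm with he
  set ν : Measure (EuclideanSpace ℝ (Fin n)) := π.map e.symm with hνdef
  have ν_apply : ∀ s : Set (EuclideanSpace ℝ (Fin n)), ν s = π (e.symm ⁻¹' s) :=
    fun s => MeasurableEquiv.map_apply e.symm s
  have hpe : ∀ (p : Fin n → ℝ) (i : Fin n), (e.symm p) i = p i := fun p i => rfl
  set C1 : ℝ := 2*(2/η+1) with hC1
  have hC1pos : 0 < C1 := by rw [hC1]; positivity
  set C2 : ℝ := C1^n * 2^n with hC2
  have hC2pos : 0 < C2 := by rw [hC2]; positivity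
  set c2 : ℝ≥0∞ := ENNReal.ofReal C2 with hc2
  -- coordinate bound
  have hcoord : ∀ (x y : EuclideanSpace ℝ (Fin n)) (i : Fin n),
      |x i - y i| ≤ dist x y := by
    intro x y i
    rw [EuclideanSpace.dist_eq]
    have h1 : |x i - y i| = Real.sqrt (dist (x i) (y i)^2) := by
      rw [Real.sqrt_sq_eq_abs, Real.dist_eq, abs_abs]
    rw [h1]
    apply Real.sqrt_le_sqrt
    exact Finset.single_le_sum (f := fun i => dist (x i) (y i)^2)
      (fun i _ => sq_nonneg _) (Finset.mem_univ i)
  -- Frostman bound for ν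
  have hfro : ∀ s : Set (EuclideanSpace ℝ (Fin n)),
      EMetric.diam s ≤ ENNReal.ofReal (1/4) → ν s ≤ c2 * EMetric.diam s ^ α := by
    intro s hs
    rcases s.eq_empty_or_nonempty with rfl | ⟨x₀, hx₀⟩
    · simp
    · set d := Metric.diam s with hd
      have hne : EMetric.diam s ≠ ⊤ := by
        intro h
        rw [h] at hs
        exact (lt_irrefl _ (lt_of_le_of_lt hs (by exact ofReal_lt_top))).elim
      have hbdd : Bornology.IsBounded s := by
        rw [Metric.isBounded_iff_ediam_ne_top]
        exact hne
      have hd0 : 0 ≤ d := Metric.diam_nonneg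
      have hd4 : d ≤ 1/4 := by
        rw [hd, Metric.diam]
        calc (EMetric.diam s).toReal ≤ (ENNReal.ofReal (1/4)).toReal :=
              ENNReal.toReal_mono ofReal_ne_top hs
          _ = 1/4 := by rw [ENNReal.toReal_ofReal]; norm_num
      have hsub : e.symm ⁻¹' s ⊆ univ.pi (fun i => Icc (x₀ i - d) (x₀ i + d)) := by
        intro p hp
        rw [mem_univ_pi]
        intro i
        have hdist : dist (e.symm p) x₀ ≤ d := Metric.dist_le_diam_of_mem hbdd hp hx₀
        have h1 := le_trans (hcoord (e.symm p) x₀ i) hdist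
        rw [hpe] at h1
        rw [mem_Icc]
        rw [abs_le] at h1
        constructor <;> linarith [h1.1, h1.2]
      have hμi : ∀ i : Fin n, μ (Icc (x₀ i - d) (x₀ i + d)) ≤
          ENNReal.ofReal (C1 * (2*d) ^ (β:ℝ)) := by
        intro i
        have h2d : (x₀ i + d) - (x₀ i - d) = 2*d := by ring
        have := mu_Icc_small hN1 hηpos hηub hη0 hη1 ha0 ha1 hsep hβ0 hβ1 hNηβ hηlb
          (x₀ i - d) (x₀ i + d) (by linarith) (by rw [h2d]; linarith)
        rw [h2d] at this
        exact this
      calc ν s = π (e.symm ⁻¹' s) := ν_apply s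
        _ ≤ π (univ.pi (fun i => Icc (x₀ i - d) (x₀ i + d))) := measure_mono hsub
        _ = ∏ i : Fin n, μ (Icc (x₀ i - d) (x₀ i + d)) := Measure.pi_pi _ _
        _ ≤ ∏ _i : Fin n, ENNReal.ofReal (C1 * (2*d) ^ (β:ℝ)) :=
            Finset.prod_le_prod' fun i _ => hμi i
        _ = ENNReal.ofReal (C1 * (2*d) ^ (β:ℝ)) ^ n := by
            rw [Finset.prod_const, Finset.card_univ, Fintype.card_fin]
        _ = ENNReal.ofReal ((C1 * (2*d) ^ (β:ℝ)) ^ n) := by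
            rw [ENNReal.ofReal_pow (by positivity)]
        _ ≤ ENNReal.ofReal (C2 * d ^ α) := by
            apply ENNReal.ofReal_le_ofReal
            have e1 : (C1 * (2*d) ^ (β:ℝ)) ^ n = C1^n * ((2*d) ^ (β:ℝ))^n := by
              rw [mul_pow]
            have e2 : ((2*d) ^ (β:ℝ))^n = (2*d) ^ (β * n) := by
              rw [← Real.rpow_natCast ((2*d) ^ (β:ℝ)) n, ← Real.rpow_mul (by linarith)]
            have e3 : (2*d) ^ (β * (n:ℝ)) = 2 ^ (β * (n:ℝ)) * d ^ (β * (n:ℝ)) :=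
              Real.mul_rpow (by norm_num) hd0
            have e4 : (2:ℝ) ^ (β * (n:ℝ)) ≤ 2 ^ (n:ℕ) := by
              calc (2:ℝ) ^ (β * (n:ℝ)) ≤ 2 ^ ((n:ℝ)) := by
                    apply Real.rpow_le_rpow_of_exponent_le one_le_two
                    nlinarith [Nat.cast_nonneg (α := ℝ) n]
                _ = 2 ^ (n:ℕ) := Real.rpow_natCast 2 n
            have e5 : d ^ (β * (n:ℝ)) = d ^ α := by rw [hα, mul_comm]
            rw [e1, e2, e3, e5, hC2]
            have hdα : 0 ≤ d ^ α := Real.rpow_nonneg hd0 α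
            have hC1n : (0:ℝ) ≤ C1^n := by positivity
            calc C1^n * (2 ^ (β * (n:ℝ)) * d ^ α) = (C1^n * 2 ^ (β * (n:ℝ))) * d ^ α := by
                  ring
              _ ≤ (C1^n * 2^n) * d ^ α := by
                  apply mul_le_mul_of_nonneg_right _ hdα
                  exact mul_le_mul_of_nonneg_left e4 hC1n
        _ = c2 * ENNReal.ofReal (d ^ α) := by
            rw [hc2, ← ENNReal.ofReal_mul (le_of_lt hC2pos)]
        _ = c2 * EMetric.diam s ^ α := by
            congr 1
            rw [← ENNReal.ofReal_rpow_of_nonneg hd0 hα0]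
            congr 1
            rw [hd, Metric.diam]
            exact ENNReal.ofReal_toReal hne
  -- mass distribution principle
  have hc2ne0 : c2 ≠ 0 := by
    rw [hc2]
    simp only [ne_eq, ENNReal.ofReal_eq_zero, not_le]
    exact hC2pos
  have hc2netop : c2 ≠ ⊤ := ofReal_ne_top
  have hmass : (c2⁻¹ • ν) ≤ μH[α] := by
    apply MeasureTheory.Measure.le_hausdorffMeasure α _ (ENNReal.ofReal (1/4))
      (ENNReal.ofReal_pos.2 (by norm_num))
    intro s hs
    rw [Measure.smul_apply, smul_eq_mul]
    calc c2⁻¹ * ν s ≤ c2⁻¹ * (c2 * EMetric.diam s ^ α) :=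
          mul_le_mul_right (hfro s hs) _
      _ = (c2⁻¹ * c2) * EMetric.diam s ^ α := (mul_assoc _ _ _).symm
      _ = 1 * EMetric.diam s ^ α := by rw [ENNReal.inv_mul_cancel hc2ne0 hc2netop]
      _ = EMetric.diam s ^ α := one_mul _
  -- ν vanishes off M
  have hνM : ν Mᶜ = 0 := by
    rw [ν_apply]
    have hsub : e.symm ⁻¹' Mᶜ ⊆ ⋃ i : Fin n, (fun p : Fin n → ℝ => p i) ⁻¹' Kᶜ := by
      intro p hp
      rw [mem_preimage, mem_compl_iff, hM, salemCube, mem_setOf_eq] at hp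
      push_neg at hp
      obtain ⟨i, hi⟩ := hp
      rw [mem_iUnion]
      exact ⟨i, by rw [mem_preimage, mem_compl_iff, ← hpe p i]; exact hi⟩
    have hzero : ∀ i : Fin n, π ((fun p : Fin n → ℝ => p i) ⁻¹' Kᶜ) = 0 := by
      intro i
      have hset : (fun p : Fin n → ℝ => p i) ⁻¹' Kᶜ =
          univ.pi (fun t => if t = i then Kᶜ else univ) := by
        ext p
        simp only [mem_preimage, mem_univ_pi]
        constructor
        · intro hp t
          by_cases ht : t = i
          · rw [if_pos ht, ht]; exact hp
          · rw [if_neg ht]; trivial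
        · intro hp
          have := hp i
          rw [if_pos rfl] at this
          exact this
      rw [hset, hπdef, Measure.pi_pi]
      apply Finset.prod_eq_zero (Finset.mem_univ i)
      rw [if_pos rfl, hK, hμdef]
      exact mu_compl_zero hηpos hηub hη0 hη1 ha0 ha1
    refine le_antisymm ?_ zero_le
    calc π (e.symm ⁻¹' Mᶜ) ≤ π (⋃ i : Fin n, (fun p : Fin n → ℝ => p i) ⁻¹' Kᶜ) :=
          measure_mono hsub
      _ ≤ ∑' i : Fin n, π ((fun p : Fin n → ℝ => p i) ⁻¹' Kᶜ) := measure_iUnion_le _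
      _ = 0 := by
          rw [tsum_fintype]
          exact Finset.sum_eq_zero fun i _ => hzero i
  -- the constant
  have hsqn : (1:ℝ) ≤ Real.sqrt n := by
    rw [show (1:ℝ) = Real.sqrt 1 from (Real.sqrt_one).symm]
    exact Real.sqrt_le_sqrt (by exact_mod_cast hn)
  have hsqn0 : (0:ℝ) < Real.sqrt n := by linarith
  set c0 : ℝ := (η / Real.sqrt n) ^ ((n:ℝ) * β) with hc0
  have hc0pos : 0 < c0 := Real.rpow_pos_of_pos (by positivity) _
  refine ⟨C2⁻¹ * c0, by positivity, ?_⟩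
  intro x hx r hr0 hr1
  -- lower bound for ν of the ball
  have hrn0 : 0 < r / Real.sqrt n := by positivity
  set rn : ℝ := r / Real.sqrt n with hrn
  have hrn1 : rn < 1 := by
    rw [hrn]
    calc r / Real.sqrt n ≤ r / 1 := by
          apply div_le_div_of_nonneg_left hr0.le ?_ hsqn
          norm_num
      _ = r := div_one r
      _ < 1 := hr1
  have hex : ∃ L, ratioProd ηs L < rn := by
    obtain ⟨L₀, hL₀⟩ := exists_pow_lt_of_lt_one hrn0 hη1
    exact ⟨L₀, lt_of_le_of_lt (rp_le hηpos hηub L₀) hL₀⟩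
  have hL := Nat.find_spec hex
  have hL1 : Nat.find hex ≠ 0 := by
    intro h0
    rw [h0, rp_zero] at hL
    linarith
  obtain ⟨j, hj⟩ := Nat.exists_eq_succ_of_ne_zero hL1
  have hP1 : ratioProd ηs (j+1) < rn := by rw [hj] at hL; exact hL
  have hP2 : rn ≤ ratioProd ηs j := by
    have := Nat.find_min hex (m := j) (by omega)
    push_neg at this
    exact this
  have hballs : univ.pi (fun i : Fin n => ball (x i) rn) ⊆ e.symm ⁻¹' (ball x r) := by
    intro p hp
    rw [mem_univ_pi] at hp
    rw [mem_preimage, mem_ball, EuclideanSpace.dist_eq]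
    haveI : Nonempty (Fin n) := Fin.pos_iff_nonempty.1 hn
    have hterm : ∀ i : Fin n, dist ((e.symm p) i) (x i)^2 < rn^2 := by
      intro i
      rw [hpe]
      have := hp i
      rw [mem_ball] at this
      exact pow_lt_pow_left₀ this dist_nonneg (by norm_num)
    have hsum : ∑ i : Fin n, dist ((e.symm p) i) (x i)^2 < (n:ℝ) * rn^2 := by
      calc ∑ i : Fin n, dist ((e.symm p) i) (x i)^2 < ∑ _i : Fin n, rn^2 :=
            Finset.sum_lt_sum_of_nonempty Finset.univ_nonempty (fun i _ => hterm i)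
        _ = (n:ℝ) * rn^2 := by
            rw [Finset.sum_const, Finset.card_univ, Fintype.card_fin, nsmul_eq_mul]
    have hnrn : (n:ℝ) * rn^2 = r^2 := by
      rw [hrn, div_pow, Real.sq_sqrt (Nat.cast_nonneg n)]
      field_simp
    rw [Real.sqrt_lt' hr0]
    rw [hnrn] at hsum
    exact hsum
  have hνball : ENNReal.ofReal (c0 * r ^ α) ≤ ν (ball x r) := by
    have hcball : ∀ i : Fin n, ENNReal.ofReal (((N:ℝ)^(j+1))⁻¹) ≤ μ (ball (x i) rn) := by
      intro i
      exact mu_ball_ge hηpos hηub hη0 hη1 ha0 ha1 (x i) (hx i) (j+1) rn hP1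
    have hNlow : c0 * r ^ α ≤ (((N:ℝ)^(j+1))⁻¹)^n := by
      have h1 : ((N:ℝ)^(j+1))⁻¹ = (η^(j+1)) ^ (β:ℝ) :=
        pow_inv_eq hη0 (by omega) hNηβ (j+1)
      have h2 : η * rn ≤ η^(j+1) := by
        have h3 : ratioProd ηs j ≤ η^j := rp_le hηpos hηub j
        have h4 : rn ≤ η^j := le_trans hP2 h3
        calc η * rn ≤ η * η^j := mul_le_mul_of_nonneg_left h4 hη0.le
          _ = η^(j+1) := by rw [pow_succ]; ring
      have h5 : (η * rn) ^ (β:ℝ) ≤ (η^(j+1)) ^ (β:ℝ) :=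
        Real.rpow_le_rpow (by positivity) h2 hβ0.le
      calc c0 * r ^ α = ((η * rn) ^ (β:ℝ))^n := by
            have hre : ((η * rn) ^ (β:ℝ))^n =
                (η/Real.sqrt n) ^ (β*(n:ℝ)) * r ^ (β*(n:ℝ)) := by
              rw [← Real.rpow_natCast ((η * rn) ^ (β:ℝ)) n,
                ← Real.rpow_mul (by positivity),
                show η * rn = (η / Real.sqrt n) * r from by rw [hrn]; ring,
                Real.mul_rpow (by positivity) hr0.le]
            rw [hre, hc0, hα, mul_comm β ((n:ℝ))]
        _ ≤ ((η^(j+1)) ^ (β:ℝ))^n := by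
            apply pow_le_pow_left₀ (by positivity) h5
        _ = (((N:ℝ)^(j+1))⁻¹)^n := by rw [h1]
    calc ENNReal.ofReal (c0 * r ^ α) ≤ ENNReal.ofReal ((((N:ℝ)^(j+1))⁻¹)^n) :=
          ENNReal.ofReal_le_ofReal hNlow
      _ = ENNReal.ofReal (((N:ℝ)^(j+1))⁻¹)^n := by
          rw [ENNReal.ofReal_pow (by positivity)]
      _ = ∏ _i : Fin n, ENNReal.ofReal (((N:ℝ)^(j+1))⁻¹) := by
          rw [Finset.prod_const, Finset.card_univ, Fintype.card_fin]
      _ ≤ ∏ i : Fin n, μ (ball (x i) rn) := Finset.prod_le_prod' fun i _ => hcball i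
      _ = π (univ.pi (fun i : Fin n => ball (x i) rn)) := (Measure.pi_pi _ _).symm
      _ ≤ π (e.symm ⁻¹' (ball x r)) := measure_mono hballs
      _ = ν (ball x r) := (ν_apply _).symm
  -- conclude
  have hνMB : ENNReal.ofReal (c0 * r ^ α) ≤ ν (M ∩ ball x r) := by
    have h1 : ν (ball x r) ≤ ν (M ∩ ball x r) + ν Mᶜ := by
      calc ν (ball x r) ≤ ν ((M ∩ ball x r) ∪ Mᶜ) := by
            apply measure_mono
            intro z hz
            by_cases hzM : z ∈ M
            · exact Or.inl ⟨hzM, hz⟩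
            · exact Or.inr hzM
        _ ≤ ν (M ∩ ball x r) + ν Mᶜ := measure_union_le _ _
    rw [hνM, add_zero] at h1
    exact le_trans hνball h1
  have hfinal := Measure.le_iff'.1 hmass (M ∩ ball x r)
  rw [Measure.smul_apply, smul_eq_mul] at hfinal
  calc ENNReal.ofReal ((C2⁻¹ * c0) * r ^ α)
      = c2⁻¹ * ENNReal.ofReal (c0 * r ^ α) := by
        rw [hc2, ← ENNReal.ofReal_inv_of_pos hC2pos,
          ← ENNReal.ofReal_mul (by positivity)]
        congr 1
        ring
    _ ≤ c2⁻¹ * ν (M ∩ ball x r) := mul_le_mul_right hνMB _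
    _ ≤ μH[α] (M ∩ ball x r) := hfinal
end
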